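/- arXiv:1902.08315 — 11 statements merged into one kernel-verified Lean document; each statement's English description precedes it below -/
import Mathlib

section
/- If T is a power bounded operator on a complex Hilbert space H (i.e., sup_n ‖T^n‖ < ∞), then the residual spectrum of T is contained in the open unit disk; equivalently, if λ has |λ| = 1 and the conjugate of λ is an eigenvalue of the adjoint T*, then λ is an eigenvalue of T. -/
open ContinuousLinearMap

open scoped InnerProductSpace

open Filter Topology

theorem stmt_0 {H : Type*} [NormedAddCommGroup H] [InnerProductSpace ℂ H]
    [CompleteSpace H] (T : H →L[ℂ] H) (hT : ∃ M, ∀ n : ℕ, ‖T ^ n‖ ≤ M) :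
    {l : ℂ | ∃ x : H, x ≠ 0 ∧ adjoint T x = (starRingEnd ℂ) l • x} \
      {l : ℂ | ∃ x : H, x ≠ 0 ∧ T x = l • x} ⊆ Metric.ball (0 : ℂ) 1 := by
  rintro l ⟨⟨x, hx, hTx⟩, hl2⟩
  rw [Metric.mem_ball, dist_zero_right]
  by_contra hlt
  push_neg at hlt
  exfalso
  apply hl2
  obtain ⟨M, hM⟩ := hT
  have hM0 : 0 ≤ M := le_trans (norm_nonneg _) (hM 0)
  have hl0 : l ≠ 0 := by
    intro h; rw [h, norm_zero] at hlt; linarith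
  have hlc0 : (starRingEnd ℂ) l ≠ 0 := by simpa using hl0
  have hlinv : ‖l⁻¹‖ ≤ 1 := by
    rw [norm_inv]
    exact inv_le_one_of_one_le₀ hlt
  -- the sequence w k = l⁻¹^k • T^k x
  set w : ℕ → H := fun k => (l⁻¹) ^ k • (T ^ k) x with hw_def
  have hTnx_bound : ∀ k, ‖(T ^ k) x‖ ≤ M * ‖x‖ := fun k =>
    le_trans ((T ^ k).le_opNorm x) (mul_le_mul_of_nonneg_right (hM k) (norm_nonneg x))
  have hw_bound : ∀ k, ‖w k‖ ≤ M * ‖x‖ := by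
    intro k
    calc ‖w k‖ = ‖(l⁻¹) ^ k‖ * ‖(T ^ k) x‖ := norm_smul _ _
    _ ≤ 1 * (M * ‖x‖) := by
        apply mul_le_mul _ (hTnx_bound k) (norm_nonneg _) zero_le_one
        rw [norm_pow]
        exact pow_le_one₀ (norm_nonneg _) hlinv
    _ = M * ‖x‖ := one_mul _
  -- inner products with x
  have hTkx : ∀ k : ℕ, ⟪(T ^ k) x, x⟫_ℂ = ((starRingEnd ℂ) l) ^ k * (‖x‖ : ℂ) ^ 2 := by
    intro k
    induction k with
    | zero => simp [inner_self_eq_norm_sq_to_K]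
    | succ k ih =>
      have : (T ^ (k + 1)) x = T ((T ^ k) x) := by rw [pow_succ']; rfl
      rw [this, ← adjoint_inner_right, hTx, inner_smul_right, ih]
      ring
  have hwx : ∀ k : ℕ, ⟪w k, x⟫_ℂ = (‖x‖ : ℂ) ^ 2 := by
    intro k
    rw [hw_def]
    simp only [inner_smul_left, hTkx, map_pow, map_inv₀]
    rw [← mul_assoc, ← mul_pow, inv_mul_cancel₀ hlc0, one_pow, one_mul]
  -- the averages
  set z : ℕ → H := fun n => ((n : ℂ))⁻¹ • ∑ k ∈ Finset.range n, w k with hz_def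
  have hz_bound : ∀ n, ‖z n‖ ≤ M * ‖x‖ := by
    intro n
    rcases Nat.eq_zero_or_pos n with h | h
    · simp [hz_def, h]; positivity
    calc ‖z n‖ ≤ ‖((n : ℂ))⁻¹‖ * ∑ k ∈ Finset.range n, ‖w k‖ :=
          (norm_smul _ _).le.trans
            (mul_le_mul_of_nonneg_left (norm_sum_le _ _) (norm_nonneg _))
    _ ≤ (n : ℝ)⁻¹ * ∑ k ∈ Finset.range n, (M * ‖x‖) := by
        rw [norm_inv, Complex.norm_natCast]
        exact mul_le_mul_of_nonneg_left (Finset.sum_le_sum (fun k _ => hw_bound k))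
          (by positivity)
    _ = M * ‖x‖ := by
        rw [Finset.sum_const, Finset.card_range, nsmul_eq_mul]
        field_simp
  have hzx : ∀ n : ℕ, 1 ≤ n → ⟪z n, x⟫_ℂ = (‖x‖ : ℂ) ^ 2 := by
    intro n hn
    have hn0 : (n : ℂ) ≠ 0 := Nat.cast_ne_zero.mpr (by omega)
    rw [hz_def]
    simp only [inner_smul_left, sum_inner, hwx, map_inv₀, map_natCast,
      Finset.sum_const, Finset.card_range, nsmul_eq_mul]
    field_simp
  -- recurrence
  have hTw : ∀ k, T (w k) = l • w (k + 1) := by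
    intro k
    rw [hw_def]
    simp only [map_smul, smul_smul]
    congr 1
    · rw [pow_succ]
      field_simp
    · rw [pow_succ']; rfl
  have hTz : ∀ n : ℕ, T (z n) = l • z n + ((n : ℂ))⁻¹ • (l • (w n - w 0)) := by
    intro n
    rw [hz_def]
    simp only [map_smul, map_sum, hTw, ← Finset.smul_sum]
    have hsum : ∑ k ∈ Finset.range n, w (k + 1)
        = (∑ k ∈ Finset.range n, w k) + (w n - w 0) := by
      have := Finset.sum_range_succ' w n
      rw [Finset.sum_range_succ] at this
      -- this : ∑ range n w + w n = ∑ range n (w ∘ +1) + w 0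
      linear_combination (norm := abel) this.symm
    rw [hsum]
    rw [smul_add, smul_add, smul_comm ((n:ℂ))⁻¹ l]
  -- ultrafilter limit
  have : (atTop : Filter ℕ).NeBot := atTop_neBot
  set U : Ultrafilter ℕ := Ultrafilter.of atTop with hU_def
  have hUle : (U : Filter ℕ) ≤ atTop := Ultrafilter.of_le _
  have hconv : ∀ v : H, ∃ c : ℂ, Tendsto (fun n => ⟪z n, v⟫_ℂ) U (𝓝 c) := by
    intro v
    have hb : ∀ n, (⟪z n, v⟫_ℂ) ∈ Metric.closedBall (0 : ℂ) (M * ‖x‖ * ‖v‖) := by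
      intro n
      rw [Metric.mem_closedBall, dist_zero_right]
      exact (norm_inner_le_norm _ _).trans
        (mul_le_mul_of_nonneg_right (hz_bound n) (norm_nonneg v))
    obtain ⟨c, _, hc⟩ := (isCompact_closedBall (0 : ℂ) (M * ‖x‖ * ‖v‖)).ultrafilter_le_nhds
      (U.map fun n => ⟪z n, v⟫_ℂ) (by
        exact le_principal_iff.mpr (Filter.mem_map.mpr (Filter.univ_mem' hb)))
    exact ⟨c, hc⟩
  choose φ hφ using hconv
  have hφ_add : ∀ v u : H, φ (v + u) = φ v + φ u := by
    intro v u
    refine tendsto_nhds_unique (hφ (v + u)) ?_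
    have : (fun n => ⟪z n, v + u⟫_ℂ) = fun n => ⟪z n, v⟫_ℂ + ⟪z n, u⟫_ℂ := by
      funext n; exact inner_add_right _ _ _
    rw [this]
    exact (hφ v).add (hφ u)
  have hφ_smul : ∀ (c : ℂ) (v : H), φ (c • v) = c * φ v := by
    intro c v
    refine tendsto_nhds_unique (hφ (c • v)) ?_
    have : (fun n => ⟪z n, c • v⟫_ℂ) = fun n => c * ⟪z n, v⟫_ℂ := by
      funext n; exact inner_smul_right _ _ _
    rw [this]
    exact (hφ v).const_mul c
  have hφ_bound : ∀ v, ‖φ v‖ ≤ M * ‖x‖ * ‖v‖ := by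
    intro v
    refine le_of_tendsto ((hφ v).norm) (Filter.Eventually.of_forall fun n => ?_)
    exact (norm_inner_le_norm _ _).trans
      (mul_le_mul_of_nonneg_right (hz_bound n) (norm_nonneg v))
  have hφx : φ x = (‖x‖ : ℂ) ^ 2 := by
    refine tendsto_nhds_unique (hφ x) ?_
    refine Tendsto.congr' ?_ tendsto_const_nhds
    filter_upwards [hUle (Filter.eventually_atTop.mpr ⟨1, fun n hn => (hzx n hn).symm⟩)] with n h
    exact h
  have hφ_adj : ∀ v, φ (adjoint T v) = (starRingEnd ℂ) l * φ v := by
    intro v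
    refine tendsto_nhds_unique (hφ (adjoint T v)) ?_
    have key : ∀ n : ℕ, ⟪z n, adjoint T v⟫_ℂ
        = (starRingEnd ℂ) l * ⟪z n, v⟫_ℂ + ⟪((n : ℂ))⁻¹ • (l • (w n - w 0)), v⟫_ℂ := by
      intro n
      rw [adjoint_inner_right, hTz n, inner_add_left, inner_smul_left]
    have herr : Tendsto (fun n : ℕ => ⟪((n : ℂ))⁻¹ • (l • (w n - w 0)), v⟫_ℂ) U (𝓝 0) := by
      apply Tendsto.mono_left _ hUle
      have hnorm : Tendsto (fun n : ℕ => (n : ℝ)⁻¹ * (‖l‖ * (M * ‖x‖ + ‖w 0‖) * ‖v‖)) atTop (𝓝 0) := by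
        simpa using ((tendsto_inv_atTop_nhds_zero_nat (𝕜 := ℝ)).mul_const (‖l‖ * (M * ‖x‖ + ‖w 0‖) * ‖v‖))
      rw [show (0 : ℂ) = 0 from rfl]
      apply squeeze_zero_norm _ hnorm
      intro n
      calc ‖⟪((n : ℂ))⁻¹ • (l • (w n - w 0)), v⟫_ℂ‖
          ≤ ‖((n : ℂ))⁻¹ • (l • (w n - w 0))‖ * ‖v‖ := norm_inner_le_norm _ _
        _ ≤ (n : ℝ)⁻¹ * (‖l‖ * (M * ‖x‖ + ‖w 0‖)) * ‖v‖ := by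
            apply mul_le_mul_of_nonneg_right _ (norm_nonneg v)
            rw [norm_smul, norm_smul]
            simp only [norm_inv, Complex.norm_natCast]
            apply mul_le_mul_of_nonneg_left _ (by positivity)
            apply mul_le_mul_of_nonneg_left _ (norm_nonneg l)
            exact (norm_sub_le _ _).trans (add_le_add_left (hw_bound n) _)
        _ = (n : ℝ)⁻¹ * (‖l‖ * (M * ‖x‖ + ‖w 0‖) * ‖v‖) := by ring
    have := ((hφ v).const_mul ((starRingEnd ℂ) l)).add herr
    rw [add_zero] at this
    exact Tendsto.congr (fun n => (key n).symm) this
  -- build the functional and the eigenvector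
  let φL : H →L[ℂ] ℂ := LinearMap.mkContinuous
    { toFun := φ
      map_add' := hφ_add
      map_smul' := hφ_smul } (M * ‖x‖) hφ_bound
  set y : H := (InnerProductSpace.toDual ℂ H).symm φL with hy_def
  have hy_inner : ∀ v, ⟪y, v⟫_ℂ = φ v := fun v => InnerProductSpace.toDual_symm_apply
  have hy0 : y ≠ 0 := by
    intro h
    have h2 := hy_inner x
    rw [h, inner_zero_left, hφx] at h2
    have h4 : (‖x‖ : ℂ) = 0 := (pow_eq_zero_iff (by norm_num : (2:ℕ) ≠ 0)).mp h2.symm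
    exact hx (norm_eq_zero.mp (Complex.ofReal_eq_zero.mp h4))
  refine ⟨y, hy0, ?_⟩
  apply ext_inner_right ℂ
  intro v
  rw [← adjoint_inner_right, hy_inner, hφ_adj, inner_smul_left, hy_inner]
end

section
/- If T is a contraction on a complex Hilbert space, then the residual spectrum of T is contained in the open unit disk. -/
open ContinuousLinearMap

local notation "⟪" x ", " y "⟫" => @inner ℂ _ _ x y

theorem stmt_1 {H : Type*} [NormedAddCommGroup H] [InnerProductSpace ℂ H]
    [CompleteSpace H] (T : H →L[ℂ] H) (hT : ‖T‖ ≤ 1) :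
    {l : ℂ | ∃ x : H, x ≠ 0 ∧ adjoint T x = (starRingEnd ℂ) l • x} \
      {l : ℂ | ∃ x : H, x ≠ 0 ∧ T x = l • x} ⊆ Metric.ball (0 : ℂ) 1 := by
  rintro l ⟨⟨x, hx, hTx⟩, hl⟩
  simp only [Metric.mem_ball, dist_zero_right]
  by_contra h
  push_neg at h
  have hxpos : (0 : ℝ) < ‖x‖ := norm_pos_iff.mpr hx
  have hadj : ‖adjoint T‖ ≤ 1 := by
    have := (ContinuousLinearMap.adjoint :
      (H →L[ℂ] H) ≃ₗᵢ⋆[ℂ] (H →L[ℂ] H)).norm_map T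
    rw [this]; exact hT
  have hle : ‖l‖ ≤ 1 := by
    have h1 := (adjoint T).le_opNorm x
    rw [hTx, norm_smul, RCLike.norm_conj] at h1
    have h2 : ‖adjoint T‖ * ‖x‖ ≤ 1 * ‖x‖ :=
      mul_le_mul_of_nonneg_right hadj (norm_nonneg x)
    nlinarith
  have hl1 : ‖l‖ = 1 := le_antisymm hle h
  apply hl
  refine ⟨x, hx, ?_⟩
  have key : ⟪x, T x⟫ = l * ⟪x, x⟫ := by
    rw [← ContinuousLinearMap.adjoint_inner_left, hTx, inner_smul_left]
    simp
  have hTxn : ‖T x‖ ≤ ‖x‖ := by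
    have := T.le_opNorm x
    nlinarith [norm_nonneg (T x)]
  have hsq : ‖T x - l • x‖ ^ 2 ≤ 0 := by
    rw [@norm_sub_sq ℂ]
    have h2 : ⟪T x, l • x⟫ = l * (starRingEnd ℂ) (⟪x, T x⟫) := by
      rw [inner_smul_right, ← inner_conj_symm]
    have h3 : RCLike.re (⟪T x, l • x⟫) = ‖x‖ ^ 2 := by
      rw [h2, key]
      have he : l * (starRingEnd ℂ) (l * ⟪x, x⟫)
          = (l * (starRingEnd ℂ) l) * (starRingEnd ℂ) (⟪x, x⟫) := by rw [map_mul]; ring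
      rw [he, Complex.mul_conj', inner_conj_symm, inner_self_eq_norm_sq_to_K]
      rw [hl1]
      norm_num
      rw [← Complex.ofReal_pow]
      exact Complex.ofReal_re _
    rw [h3]
    rw [norm_smul, hl1]
    nlinarith [sq_nonneg (‖x‖ - ‖T x‖), norm_nonneg (T x)]
  have hz : T x - l • x = 0 := by
    have h4 := sq_nonneg ‖T x - l • x‖
    have h0 : ‖T x - l • x‖ = 0 := by nlinarith
    exact norm_eq_zero.mp h0
  linear_combination (norm := module) hz
end

section
/- Every power bounded operator on a Hilbert space is strongly ergodic: the sequence of Cesàro means C_n = (1/n) ∑_{k=0}^{n-1} T^k converges strongly, i.e., for every x ∈ H the sequence C_n x converges in H. -/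
open Filter Finset Metric

section MeanErgodicAux

variable {H : Type*} [NormedAddCommGroup H] [InnerProductSpace ℂ H] [CompleteSpace H]

set_option linter.unusedSectionVars false

/-- Cesàro means of a bounded operator. -/
noncomputable def ces (T : H →L[ℂ] H) (n : ℕ) : H →L[ℂ] H :=
  (n : ℂ)⁻¹ • ∑ k ∈ Finset.range n, T ^ k

lemma ces_apply (T : H →L[ℂ] H) (n : ℕ) (u : H) :
    ces T n u = (n : ℂ)⁻¹ • ∑ k ∈ Finset.range n, (T ^ k) u := by
  simp [ces, ContinuousLinearMap.sum_apply]

lemma ces_bound {T : H →L[ℂ] H} {M : ℝ} (hM : ∀ n, ‖T ^ n‖ ≤ M) (n : ℕ) (u : H) :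
    ‖ces T n u‖ ≤ M * ‖u‖ := by
  have hM0 : 0 ≤ M := le_trans (norm_nonneg _) (hM 0)
  rcases Nat.eq_zero_or_pos n with rfl | hn
  · simp [ces_apply]; positivity
  · rw [ces_apply, norm_smul]
    have h1 : ‖∑ k ∈ range n, (T ^ k) u‖ ≤ ∑ k ∈ range n, M * ‖u‖ :=
      (norm_sum_le _ _).trans (Finset.sum_le_sum fun k _ =>
        (T ^ k).le_of_opNorm_le (hM k) u)
    rw [Finset.sum_const, card_range, nsmul_eq_mul] at h1
    have h2 : ‖((n : ℂ))⁻¹‖ = (n : ℝ)⁻¹ := by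
      rw [norm_inv, Complex.norm_natCast]
    rw [h2]
    calc (n:ℝ)⁻¹ * ‖∑ k ∈ range n, (T ^ k) u‖ ≤ (n:ℝ)⁻¹ * (n * (M * ‖u‖)) := by
          apply mul_le_mul_of_nonneg_left h1 (by positivity)
      _ = M * ‖u‖ := by field_simp

lemma telesc (T : H →L[ℂ] H) (n : ℕ) (z : H) :
    ∑ k ∈ Finset.range n, (T ^ k) (T z - z) = (T ^ n) z - z := by
  have h : ∀ k : ℕ, (T ^ k) (T z - z) = (T ^ (k+1)) z - (T ^ k) z := by
    intro k
    rw [map_sub, pow_succ, ContinuousLinearMap.mul_apply]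
  simp only [h]
  rw [Finset.sum_range_sub (fun k => (T ^ k) z)]
  simp

lemma ces_range_tendsto {T : H →L[ℂ] H} {M : ℝ} (hM : ∀ n, ‖T ^ n‖ ≤ M) (z : H) :
    Tendsto (fun n => ces T n (T z - z)) atTop (nhds 0) := by
  have key : ∀ n : ℕ, ‖ces T n (T z - z)‖ ≤ (M * ‖z‖ + ‖z‖) / n := by
    intro n
    rw [ces_apply, telesc, norm_smul, norm_inv, Complex.norm_natCast, div_eq_inv_mul]
    apply mul_le_mul_of_nonneg_left _ (by positivity)
    exact (norm_sub_le _ _).trans (add_le_add ((T ^ n).le_of_opNorm_le (hM n) z) le_rfl)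
  apply squeeze_zero_norm key
  exact tendsto_const_div_atTop_nhds_zero_nat _

lemma ces_fixed {T : H →L[ℂ] H} {y : H} (hy : T y = y) {n : ℕ} (hn : 1 ≤ n) :
    ces T n y = y := by
  have h : ∀ k : ℕ, (T ^ k) y = y := by
    intro k
    induction k with
    | zero => simp
    | succ k ih => rw [pow_succ, ContinuousLinearMap.mul_apply, hy, ih]
  rw [ces_apply]
  simp only [h, Finset.sum_const, card_range]
  rw [← Nat.cast_smul_eq_nsmul ℂ, smul_smul, inv_mul_cancel₀, one_smul]
  exact_mod_cast (Nat.pos_of_ne_zero (by omega)).ne'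

lemma ces_comm (T : H →L[ℂ] H) (n : ℕ) (u : H) :
    T (ces T n u) = ces T n (T u) := by
  rw [ces_apply, ces_apply, map_smul, map_sum]
  congr 1
  refine Finset.sum_congr rfl fun k _ => ?_
  rw [← ContinuousLinearMap.mul_apply, ← ContinuousLinearMap.mul_apply, ← pow_succ', ← pow_succ]

lemma ces_closure_tendsto {T : H →L[ℂ] H} {M : ℝ} (hM1 : 1 ≤ M) (hM : ∀ n, ‖T ^ n‖ ≤ M)
    {u : H} (hu : u ∈ closure ((LinearMap.range ((T - 1 : H →L[ℂ] H) : H →ₗ[ℂ] H) : Submodule ℂ H) : Set H)) :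
    Tendsto (fun n => ces T n u) atTop (nhds 0) := by
  rw [Metric.tendsto_atTop]
  intro ε hε
  have hM0 : (0:ℝ) < M := lt_of_lt_of_le one_pos hM1
  obtain ⟨v, hv, hvu⟩ := Metric.mem_closure_iff.mp hu (ε / (2 * M)) (by positivity)
  obtain ⟨z, hz⟩ := LinearMap.mem_range.mp hv
  have hzv : T z - z = v := by
    rw [← hz]; simp [ContinuousLinearMap.sub_apply]
  obtain ⟨N, hN⟩ := Metric.tendsto_atTop.mp (ces_range_tendsto hM z) (ε / 2) (by positivity)
  refine ⟨N, fun n hn => ?_⟩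
  have hdec : ces T n u = ces T n (u - v) + ces T n (T z - z) := by
    rw [hzv, ← map_add]; congr 1; abel
  rw [dist_zero_right, hdec]
  calc ‖ces T n (u - v) + ces T n (T z - z)‖
      ≤ ‖ces T n (u - v)‖ + ‖ces T n (T z - z)‖ := norm_add_le _ _
    _ < M * (ε / (2 * M)) + ε / 2 := by
        apply add_lt_add_of_le_of_lt
        · exact (ces_bound hM n _).trans (mul_le_mul_of_nonneg_left
            (by rw [← dist_eq_norm]; exact le_of_lt hvu) hM0.le)
        · have := hN n hn; rwa [dist_zero_right] at this
    _ ≤ ε := by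
        have : M * (ε / (2 * M)) = ε/2 := by field_simp
        rw [this]; linarith

lemma exists_weak_cluster (f : ℕ → H) {R : ℝ} (hf : ∀ n, ‖f n‖ ≤ R)
    (U : Ultrafilter ℕ) :
    ∃ y : H, ∀ z : H, Tendsto (fun n => (inner ℂ (f n) z : ℂ)) (U : Filter ℕ) (nhds (inner ℂ y z)) := by
  set g : ℕ → WeakDual ℂ H := fun n =>
    StrongDual.toWeakDual (InnerProductSpace.toDual ℂ H (f n)) with hg
  have hmem : ∀ n, g n ∈ WeakDual.toStrongDual ⁻¹' closedBall 0 R := by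
    intro n
    simp only [Set.mem_preimage, mem_closedBall, dist_zero_right]
    show ‖(InnerProductSpace.toDual ℂ H (f n) : StrongDual ℂ H)‖ ≤ R
    rw [LinearIsometryEquiv.norm_map]
    exact hf n
  have hcompact := WeakDual.isCompact_closedBall (𝕜 := ℂ) (E := H) 0 R
  obtain ⟨φ, hφmem, hφ⟩ := hcompact.ultrafilter_le_nhds (U.map g)
    (by rw [Ultrafilter.coe_map, Filter.le_principal_iff, Filter.mem_map]
        exact Filter.univ_mem' hmem)
  rw [Ultrafilter.coe_map] at hφ
  refine ⟨(InnerProductSpace.toDual ℂ H).symm (WeakDual.toStrongDual φ), fun z => ?_⟩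
  have heval : Tendsto (fun ψ : WeakDual ℂ H => ψ z) (nhds φ) (nhds (φ z)) :=
    (WeakDual.eval_continuous z).continuousAt
  have hgt : Tendsto g (U : Filter ℕ) (nhds φ) := hφ
  have hcomp := heval.comp hgt
  have hgz : ∀ n, g n z = (inner ℂ (f n) z : ℂ) := fun n => InnerProductSpace.toDual_apply_apply ..
  have hyz : (inner ℂ ((InnerProductSpace.toDual ℂ H).symm (WeakDual.toStrongDual φ)) z : ℂ)
      = φ z := InnerProductSpace.toDual_symm_apply
  rw [hyz]
  simpa only [Function.comp_def, hgz] using hcomp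

lemma pow_sub_self_mem_range (T : H →L[ℂ] H) (x : H) (k : ℕ) :
    (T ^ k) x - x ∈ LinearMap.range ((T - 1 : H →L[ℂ] H) : H →ₗ[ℂ] H) := by
  refine LinearMap.mem_range.mpr ⟨∑ j ∈ Finset.range k, (T ^ j) x, ?_⟩
  rw [map_sum, ← telesc T k x]
  refine Finset.sum_congr rfl fun j _ => ?_
  show T ((T ^ j) x) - (T ^ j) x = (T ^ j) (T x - x)
  rw [map_sub]
  congr 1
  rw [← ContinuousLinearMap.mul_apply, ← ContinuousLinearMap.mul_apply, ← pow_succ', ← pow_succ]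

lemma ces_sub_self_mem (T : H →L[ℂ] H) (x : H) {n : ℕ} (hn : 1 ≤ n) :
    ces T n x - x ∈ LinearMap.range ((T - 1 : H →L[ℂ] H) : H →ₗ[ℂ] H) := by
  have hn' : ((n : ℂ)) ≠ 0 := by exact_mod_cast (Nat.pos_of_ne_zero (by omega)).ne'
  have heq : ces T n x - x = (n:ℂ)⁻¹ • ∑ k ∈ Finset.range n, ((T ^ k) x - x) := by
    rw [ces_apply, Finset.sum_sub_distrib, smul_sub, Finset.sum_const, card_range,
      ← Nat.cast_smul_eq_nsmul ℂ, smul_smul, inv_mul_cancel₀ hn', one_smul]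
  rw [heq]
  exact Submodule.smul_mem _ _ (Submodule.sum_mem _ fun k _ => pow_sub_self_mem_range T x k)

end MeanErgodicAux

theorem stmt_3 {H : Type*} [NormedAddCommGroup H] [InnerProductSpace ℂ H]
    [CompleteSpace H] (T : H →L[ℂ] H) (hT : ∃ M, ∀ n : ℕ, ‖T ^ n‖ ≤ M) :
    ∀ x : H, ∃ y : H, Filter.Tendsto
      (fun n : ℕ => (((n : ℂ)⁻¹ • ∑ k ∈ Finset.range n, T ^ k) : H →L[ℂ] H) x)
      Filter.atTop (nhds y) := by
  obtain ⟨M₀, hM₀⟩ := hT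
  set M : ℝ := max M₀ 1 with hMdef
  have hM1 : (1:ℝ) ≤ M := le_max_right _ _
  have hM : ∀ n, ‖T ^ n‖ ≤ M := fun n => (hM₀ n).trans (le_max_left _ _)
  intro x
  set U : Ultrafilter ℕ := Ultrafilter.of atTop with hUdef
  have hU : (U : Filter ℕ) ≤ atTop := Ultrafilter.of_le _
  obtain ⟨y, hy⟩ := exists_weak_cluster (fun n => ces T n x)
    (R := M * ‖x‖) (fun n => ces_bound hM n x) U
  -- Step A : T y = y
  have hTy : T y = y := by
    have key : ∀ z : H, (inner ℂ (T y - y) z : ℂ) = 0 := by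
      intro z
      have h1 : Tendsto (fun n => (inner ℂ (T (ces T n x) - ces T n x) z : ℂ))
          (U : Filter ℕ) (nhds (inner ℂ (T y - y) z)) := by
        have hA : Tendsto (fun n => (inner ℂ (T (ces T n x)) z : ℂ))
            (U : Filter ℕ) (nhds (inner ℂ (T y) z)) := by
          have := hy ((ContinuousLinearMap.adjoint T) z)
          simpa only [ContinuousLinearMap.adjoint_inner_right] using this
        have hB := hy z
        simpa only [inner_sub_left] using hA.sub hB
      have h2 : Tendsto (fun n => (inner ℂ (T (ces T n x) - ces T n x) z : ℂ))
          (U : Filter ℕ) (nhds 0) := by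
        have h3 : Tendsto (fun n => ces T n (T x - x)) atTop (nhds (0:H)) :=
          ces_range_tendsto hM x
        have h4 : Tendsto (fun n => (inner ℂ (ces T n (T x - x)) z : ℂ)) atTop
            (nhds (inner ℂ (0:H) z)) := h3.inner tendsto_const_nhds
        rw [inner_zero_left] at h4
        have h5 : (fun n => (inner ℂ (T (ces T n x) - ces T n x) z : ℂ))
            = fun n => (inner ℂ (ces T n (T x - x)) z : ℂ) := by
          funext n; rw [ces_comm, ← map_sub]
        rw [h5]
        exact h4.mono_left hU
      exact tendsto_nhds_unique h1 h2
    have := key (T y - y)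
    rwa [inner_self_eq_zero, sub_eq_zero] at this
  -- Step B : x - y belongs to the closure of the range of T - 1
  set K : Submodule ℂ H := (LinearMap.range ((T - 1 : H →L[ℂ] H) : H →ₗ[ℂ] H)).topologicalClosure with hKdef
  haveI : CompleteSpace K :=
    (LinearMap.range ((T - 1 : H →L[ℂ] H) : H →ₗ[ℂ] H)).isClosed_topologicalClosure.completeSpace_coe
  have hxyK : x - y ∈ K := by
    have hp : ((K.orthogonalProjection (x - y) : K) : H) ∈ K :=
      (K.orthogonalProjection (x - y)).2
    have hw : x - y - (K.orthogonalProjection (x - y) : K) ∈ Kᗮ :=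
      K.sub_starProjection_mem_orthogonal (x - y)
    have hxw : (inner ℂ (x - y) (x - y - ((K.orthogonalProjection (x - y) : K) : H)) : ℂ) = 0 := by
      have hcongr : ∀ᶠ n in (U : Filter ℕ),
          (inner ℂ (ces T n x) (x - y - ((K.orthogonalProjection (x - y) : K) : H)) : ℂ)
            = inner ℂ x (x - y - ((K.orthogonalProjection (x - y) : K) : H)) := by
        apply hU
        filter_upwards [Filter.eventually_ge_atTop 1] with n hn
        have hmem : ces T n x - x ∈ K :=
          Submodule.le_topologicalClosure _ (ces_sub_self_mem T x hn)
        have h0 := (Submodule.mem_orthogonal K _).mp hw _ hmem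
        rw [inner_sub_left, sub_eq_zero] at h0
        exact h0
      have h1 := hy (x - y - ((K.orthogonalProjection (x - y) : K) : H))
      have h2 : Tendsto (fun n =>
          (inner ℂ (ces T n x) (x - y - ((K.orthogonalProjection (x - y) : K) : H)) : ℂ))
          (U : Filter ℕ)
          (nhds (inner ℂ x (x - y - ((K.orthogonalProjection (x - y) : K) : H)))) :=
        Tendsto.congr' (hcongr.mono fun n h => h.symm) tendsto_const_nhds
      have h3 := tendsto_nhds_unique h1 h2
      rw [inner_sub_left, h3, sub_self]
    have hpw : (inner ℂ (((K.orthogonalProjection (x - y) : K) : H))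
        (x - y - ((K.orthogonalProjection (x - y) : K) : H)) : ℂ) = 0 :=
      (Submodule.mem_orthogonal K _).mp hw _ hp
    have hwzero : x - y - ((K.orthogonalProjection (x - y) : K) : H) = 0 := by
      have : (inner ℂ (x - y - ((K.orthogonalProjection (x - y) : K) : H))
          (x - y - ((K.orthogonalProjection (x - y) : K) : H)) : ℂ) = 0 := by
        rw [inner_sub_left, hxw, hpw, sub_self]
      rwa [inner_self_eq_zero] at this
    have heq : x - y = ((K.orthogonalProjection (x - y) : K) : H) := by
      rwa [sub_eq_zero] at hwzero
    rw [heq]; exact hp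
  -- Step C : conclusion
  have hclos : Tendsto (fun n => ces T n (x - y)) atTop (nhds 0) := by
    apply ces_closure_tendsto hM1 hM
    rw [← Submodule.topologicalClosure_coe]
    exact hxyK
  refine ⟨y, ?_⟩
  have hfin : Tendsto (fun n => ces T n x) atTop (nhds y) := by
    have h1 : Tendsto (fun n => y + ces T n (x - y)) atTop (nhds (y + 0)) :=
      tendsto_const_nhds.add hclos
    rw [add_zero] at h1
    apply h1.congr'
    filter_upwards [Filter.eventually_ge_atTop 1] with n hn
    calc y + ces T n (x - y) = ces T n y + ces T n (x - y) := by rw [ces_fixed hTy hn]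
      _ = ces T n (y + (x - y)) := (map_add _ _ _).symm
      _ = ces T n x := by congr 1; abel
  exact hfin
end

section
/- Let T be power bounded on a Hilbert space H, let λ with |λ| = 1, and suppose T* x₀ = conj(λ) x₀ for some nonzero x₀ ∈ H. Then there exists a nonzero y₀ ∈ H with T y₀ = λ y₀. -/
open ContinuousLinearMap Filter Finset Metric
open scoped Topology ComplexConjugate InnerProductSpace

private lemma mapClusterPt_eq_of_tendsto {α : Type*} [TopologicalSpace α] [T2Space α]
    {u : ℕ → α} {a b : α} (h : MapClusterPt a atTop u) (h' : Tendsto u atTop (𝓝 b)) :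
    a = b := by
  have hne : (𝓝 a ⊓ 𝓝 b).NeBot := by
    refine Filter.NeBot.mono h ?_
    exact inf_le_inf_left _ h'
  exact eq_of_nhds_neBot hne

set_option maxHeartbeats 1000000 in
theorem stmt_4 {H : Type*} [NormedAddCommGroup H] [InnerProductSpace ℂ H]
    [CompleteSpace H] (T : H →L[ℂ] H) (hT : ∃ M, ∀ n : ℕ, ‖T ^ n‖ ≤ M)
    (l : ℂ) (hl : ‖l‖ = 1) (x₀ : H) (hx₀ : x₀ ≠ 0)
    (h : adjoint T x₀ = (starRingEnd ℂ) l • x₀) :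
    ∃ y₀ : H, y₀ ≠ 0 ∧ T y₀ = l • y₀ := by
  obtain ⟨M, hM⟩ := hT
  -- basic facts about l
  have hl1 : l * conj l = 1 := by
    have : Complex.normSq l = 1 := by
      rw [← Complex.sq_norm, hl]; norm_num
    rw [Complex.mul_conj, this]; norm_num
  have hl1' : conj l * l = 1 := by rwa [mul_comm] at hl1
  -- the operator S = conj l • T
  set S : H →L[ℂ] H := conj l • T with hSdef
  have hadj : adjoint S x₀ = x₀ := by
    have : adjoint S = l • adjoint T := by
      rw [hSdef, map_smulₛₗ]
      simp
    rw [this]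
    simp only [ContinuousLinearMap.smul_apply, h, smul_smul, hl1, one_smul]
  have key : ∀ u : H, ⟪x₀, S u⟫_ℂ = ⟪x₀, u⟫_ℂ := fun u => by
    rw [← adjoint_inner_left, hadj]
  have keypow : ∀ n : ℕ, ∀ u : H, ⟪x₀, (S ^ n) u⟫_ℂ = ⟪x₀, u⟫_ℂ := by
    intro n
    induction n with
    | zero => intro u; simp
    | succ n ih =>
      intro u
      rw [pow_succ', ContinuousLinearMap.mul_apply, key, ih]
  -- norm bounds on the orbit
  have hSn : ∀ n : ℕ, ‖(S ^ n) x₀‖ ≤ M * ‖x₀‖ := by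
    intro n
    have : S ^ n = (conj l) ^ n • T ^ n := smul_pow _ _ _
    rw [this]
    simp only [ContinuousLinearMap.smul_apply, norm_smul, norm_pow, RCLike.norm_conj, hl,
      one_pow, one_mul]
    calc ‖(T ^ n) x₀‖ ≤ ‖T ^ n‖ * ‖x₀‖ := (T ^ n).le_opNorm x₀
      _ ≤ M * ‖x₀‖ := by gcongr; exact hM n
  -- Cesàro averages
  set b : ℕ → H := fun N => (((N : ℕ) + 1 : ℂ))⁻¹ • ∑ n ∈ range (N + 1), (S ^ n) x₀ with hbdef
  have hNne : ∀ N : ℕ, ((N : ℂ) + 1) ≠ 0 := by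
    intro N
    have : ((N + 1 : ℕ) : ℂ) ≠ 0 := Nat.cast_ne_zero.2 (Nat.succ_ne_zero N)
    push_cast at this
    exact this
  have hb_norm : ∀ N, ‖b N‖ ≤ M * ‖x₀‖ := by
    intro N
    rw [hbdef]
    simp only [norm_smul, norm_inv]
    have h1 : ‖∑ n ∈ range (N + 1), (S ^ n) x₀‖ ≤ (N + 1 : ℝ) * (M * ‖x₀‖) := by
      calc ‖∑ n ∈ range (N + 1), (S ^ n) x₀‖ ≤ ∑ n ∈ range (N + 1), ‖(S ^ n) x₀‖ :=
            norm_sum_le _ _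
        _ ≤ ∑ _n ∈ range (N + 1), (M * ‖x₀‖) := Finset.sum_le_sum fun n _ => hSn n
        _ = (N + 1 : ℝ) * (M * ‖x₀‖) := by simp [mul_comm]
    have h2 : ‖((N : ℂ) + 1)‖ = (N : ℝ) + 1 := by
      rw [show ((N : ℂ) + 1) = ((N + 1 : ℕ) : ℂ) by push_cast; ring, Complex.norm_natCast]
      push_cast; ring
    rw [h2]
    calc ((N : ℝ) + 1)⁻¹ * ‖∑ n ∈ range (N + 1), (S ^ n) x₀‖
        ≤ ((N : ℝ) + 1)⁻¹ * ((N + 1 : ℝ) * (M * ‖x₀‖)) := by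
          gcongr
      _ = M * ‖x₀‖ := by field_simp
  have hb_inner : ∀ N, ⟪x₀, b N⟫_ℂ = ⟪x₀, x₀⟫_ℂ := by
    intro N
    rw [hbdef]
    simp only [inner_smul_right, inner_sum]
    rw [Finset.sum_congr rfl fun n _ => keypow n x₀]
    simp only [Finset.sum_const, Finset.card_range, nsmul_eq_mul]
    push_cast
    rw [inv_mul_cancel_left₀ (hNne N)]
  -- almost invariance
  have hb_S : ∀ N, S (b N) - b N = (((N : ℕ) + 1 : ℂ))⁻¹ • ((S ^ (N + 1)) x₀ - x₀) := by
    intro N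
    rw [hbdef]
    simp only
    rw [map_smul, ← smul_sub]
    congr 1
    rw [map_sum]
    have : ∀ n ∈ range (N + 1), S ((S ^ n) x₀) = (S ^ (n + 1)) x₀ := by
      intro n _
      rw [pow_succ', ContinuousLinearMap.mul_apply]
    rw [Finset.sum_congr rfl this]
    have e1 : ∑ n ∈ range (N + 1), (S ^ (n + 1)) x₀
        = (∑ n ∈ range (N + 1), (S ^ n) x₀) + (S ^ (N + 1)) x₀ - (S ^ 0) x₀ := by
      have e0 := Finset.sum_range_succ' (fun n => (S ^ n) x₀) (N + 1)
      have e2 := Finset.sum_range_succ (fun n => (S ^ n) x₀) (N + 1)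
      rw [← e2, e0]
      abel
    rw [e1]
    simp
    abel
  have hb_S_norm : Tendsto (fun N => S (b N) - b N) atTop (𝓝 0) := by
    have hbound : ∀ N : ℕ, ‖S (b N) - b N‖ ≤ (M * ‖x₀‖ + ‖x₀‖) / ((N : ℝ) + 1) := by
      intro N
      rw [hb_S N, norm_smul, norm_inv]
      have h2 : ‖((N : ℂ) + 1)‖ = (N : ℝ) + 1 := by
        rw [show ((N : ℂ) + 1) = ((N + 1 : ℕ) : ℂ) by push_cast; ring, Complex.norm_natCast]
        push_cast; ring
      rw [h2, div_eq_inv_mul]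
      refine mul_le_mul_of_nonneg_left ?_ (by positivity)
      calc ‖(S ^ (N + 1)) x₀ - x₀‖ ≤ ‖(S ^ (N + 1)) x₀‖ + ‖x₀‖ := norm_sub_le _ _
        _ ≤ M * ‖x₀‖ + ‖x₀‖ := by gcongr; exact hSn (N + 1)
    have htend : Tendsto (fun N : ℕ => (M * ‖x₀‖ + ‖x₀‖) / ((N : ℝ) + 1)) atTop (𝓝 0) := by
      have := tendsto_const_div_atTop_nhds_zero_nat (M * ‖x₀‖ + ‖x₀‖)
      have h3 := this.comp (tendsto_add_atTop_nat 1)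
      have h4 : (fun N : ℕ => (M * ‖x₀‖ + ‖x₀‖) / ((N : ℝ) + 1))
          = (fun n : ℕ => (M * ‖x₀‖ + ‖x₀‖) / (n : ℝ)) ∘ (fun a => a + 1) := by
        funext a
        simp only [Function.comp_apply]
        push_cast
        ring
      rw [h4]
      exact h3
    exact squeeze_zero_norm hbound htend
  -- pass to weak dual
  set φ : ℕ → WeakDual ℂ H :=
    fun N => StrongDual.toWeakDual (InnerProductSpace.toDual ℂ H (b N)) with hφdef
  have hφmem : ∀ N, φ N ∈ WeakDual.toStrongDual ⁻¹' closedBall 0 (M * ‖x₀‖) := by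
    intro N
    simp only [Set.mem_preimage, mem_closedBall, dist_zero_right]
    show ‖InnerProductSpace.toDual ℂ H (b N)‖ ≤ M * ‖x₀‖
    rw [LinearIsometryEquiv.norm_map]
    exact hb_norm N
  have hcomp : IsCompact (WeakDual.toStrongDual ⁻¹' closedBall (0 : StrongDual ℂ H)
      (M * ‖x₀‖)) := WeakDual.isCompact_closedBall (𝕜 := ℂ) (E := H) 0 (M * ‖x₀‖)
  obtain ⟨ψ, -, hψ⟩ := hcomp.exists_clusterPt (f := Filter.map φ atTop)
    (le_principal_iff.2 (Filter.mem_map.mpr (Filter.Eventually.of_forall hφmem)))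
  have hψ' : MapClusterPt ψ atTop φ := hψ
  -- evaluation facts about φ
  have hφeval : ∀ N (u : H), φ N u = ⟪b N, u⟫_ℂ := fun N u => InnerProductSpace.toDual_apply_apply
  -- the candidate eigenvector
  set y : H := (InnerProductSpace.toDual ℂ H).symm (WeakDual.toStrongDual ψ) with hydef
  have hy : ∀ u : H, ⟪y, u⟫_ℂ = ψ u := by
    intro u
    rw [← InnerProductSpace.toDual_apply_apply, hydef, LinearIsometryEquiv.apply_symm_apply]
    rfl
  -- y is nonzero
  have hyx₀ : ψ x₀ = ⟪x₀, x₀⟫_ℂ := by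
    have hcont : ContinuousAt (fun χ : WeakDual ℂ H => χ x₀) ψ :=
      (WeakDual.eval_continuous x₀).continuousAt
    have h1 : MapClusterPt (ψ x₀) atTop ((fun χ : WeakDual ℂ H => χ x₀) ∘ φ) :=
      hψ'.continuousAt_comp hcont
    have h2 : Tendsto ((fun χ : WeakDual ℂ H => χ x₀) ∘ φ) atTop (𝓝 ⟪x₀, x₀⟫_ℂ) := by
      have : ∀ N, ((fun χ : WeakDual ℂ H => χ x₀) ∘ φ) N = ⟪x₀, x₀⟫_ℂ := by
        intro N
        simp only [Function.comp_apply, hφeval]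
        rw [← inner_conj_symm, hb_inner N, inner_conj_symm]
      simp only [funext this]
      exact tendsto_const_nhds
    exact mapClusterPt_eq_of_tendsto h1 h2
  have hyne : y ≠ 0 := by
    intro h0
    have : ψ x₀ = 0 := by rw [← hy, h0, inner_zero_left]
    rw [hyx₀] at this
    exact inner_self_ne_zero.2 hx₀ this
  -- y is a fixed point of S
  have hfix : ∀ v : H, ψ (adjoint S v) - ψ v = 0 := by
    intro v
    have hcont : ContinuousAt (fun χ : WeakDual ℂ H => χ (adjoint S v) - χ v) ψ :=
      ((WeakDual.eval_continuous (adjoint S v)).sub (WeakDual.eval_continuous v)).continuousAt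
    have h1 : MapClusterPt (ψ (adjoint S v) - ψ v) atTop
        ((fun χ : WeakDual ℂ H => χ (adjoint S v) - χ v) ∘ φ) := hψ'.continuousAt_comp hcont
    have h2 : Tendsto ((fun χ : WeakDual ℂ H => χ (adjoint S v) - χ v) ∘ φ) atTop (𝓝 0) := by
      have heq : ∀ N, ((fun χ : WeakDual ℂ H => χ (adjoint S v) - χ v) ∘ φ) N
          = ⟪S (b N) - b N, v⟫_ℂ := by
        intro N
        simp only [Function.comp_apply, hφeval]
        rw [adjoint_inner_right, inner_sub_left]
      simp only [funext heq]
      have h5 : Tendsto (fun _ : ℕ => v) atTop (𝓝 v) := tendsto_const_nhds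
      have := Filter.Tendsto.inner (𝕜 := ℂ) hb_S_norm h5
      simpa [inner_sub_left] using this
    exact mapClusterPt_eq_of_tendsto h1 h2
  have hSy : S y = y := by
    apply ext_inner_right ℂ
    intro v
    rw [← adjoint_inner_right, hy, hy]
    have := hfix v
    linear_combination this
  refine ⟨y, hyne, ?_⟩
  -- from S y = y conclude T y = l • y
  have : (conj l) • T y = y := by
    conv_rhs => rw [← hSy]
    rw [hSdef, ContinuousLinearMap.smul_apply]
  calc T y = (l * conj l) • T y := by rw [hl1, one_smul]
    _ = l • ((conj l) • T y) := by rw [smul_smul]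
    _ = l • y := by rw [this]
end

section
/- If T is power bounded on a Hilbert space, then the intersection of the unit circle with the set of conjugates of eigenvalues of T* equals the intersection of the unit circle with the set of eigenvalues of T: σ_P(T*)* ∩ 𝕋 = σ_P(T) ∩ 𝕋. -/
open ContinuousLinearMap

local notation "⟪" x ", " y "⟫" => @inner ℂ _ _ x y

lemma stmt_5_key {H : Type*} [NormedAddCommGroup H] [InnerProductSpace ℂ H]
    [CompleteSpace H] (T : H →L[ℂ] H) (M : ℝ) (hM : ∀ n : ℕ, ‖T ^ n‖ ≤ M)
    (l : ℂ) (hl : ‖l‖ = 1) (x : H) (hx : x ≠ 0) (hTx : T x = l • x) :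
    ∃ z : H, z ≠ 0 ∧ adjoint T z = (starRingEnd ℂ) l • z := by
  have : Nontrivial H := nontrivial_of_ne x 0 hx
  have hM1 : (1 : ℝ) ≤ M := by simpa using hM 0
  have hM0 : (0 : ℝ) < M := lt_of_lt_of_le one_pos hM1
  set μ := (starRingEnd ℂ) l with hμ
  have hμl : μ * l = 1 := by
    rw [hμ, mul_comm]
    have := Complex.mul_conj l
    rw [this]
    norm_cast
    rw [Complex.normSq_eq_norm_sq, hl]
    norm_num
  have hμn : ‖μ‖ = 1 := by rw [hμ, RCLike.norm_conj, hl]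
  -- key inequality: distance from x to the range of (T - l) is at least ‖x‖/M
  have hkey : ∀ y : H, ‖x‖ ≤ M * ‖x - (T y - l • y)‖ := by
    intro y
    set w := T y - l • y with hw
    set c : ℕ → H := fun n => μ ^ n • ((T ^ n) y) with hc
    have hTxn : ∀ n : ℕ, (T ^ n) x = l ^ n • x := by
      intro n
      induction n with
      | zero => simp
      | succ n ih =>
        rw [pow_succ, ContinuousLinearMap.mul_apply, hTx, map_smul, ih, smul_smul, pow_succ, mul_comm]
    have htermx : ∀ n : ℕ, μ ^ n • ((T ^ n) x) = x := by
      intro n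
      rw [hTxn, smul_smul, ← mul_pow, hμl, one_pow, one_smul]
    have htermw : ∀ n : ℕ, μ ^ n • ((T ^ n) w) = l • (c (n + 1) - c n) := by
      intro n
      have h1 : (T ^ n) w = (T ^ (n + 1)) y - l • ((T ^ n) y) := by
        rw [hw, map_sub, map_smul, pow_succ, ContinuousLinearMap.mul_apply]
      have h2 : l * μ ^ (n + 1) = μ ^ n := by
        rw [pow_succ]
        calc l * (μ ^ n * μ) = (μ * l) * μ ^ n := by ring
        _ = μ ^ n := by rw [hμl, one_mul]
      rw [h1, smul_sub, hc]
      simp only [smul_sub, smul_smul, h2]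
      rw [mul_comm l (μ ^ n)]
    have hsum : ∀ N : ℕ,
        (∑ n ∈ Finset.range N, μ ^ n • ((T ^ n) (x - w)))
          = (N : ℂ) • x - l • (c N - c 0) := by
      intro N
      have : ∀ n ∈ Finset.range N, μ ^ n • ((T ^ n) (x - w))
          = x - l • (c (n + 1) - c n) := by
        intro n _
        rw [map_sub, smul_sub, htermx, htermw]
      rw [Finset.sum_congr rfl this, Finset.sum_sub_distrib, Finset.sum_const,
        Finset.card_range, ← Finset.smul_sum, Finset.sum_range_sub, ← Nat.cast_smul_eq_nsmul ℂ]
    have hcb : ∀ n : ℕ, ‖c n‖ ≤ M * ‖y‖ := by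
      intro n
      rw [hc]
      simp only [norm_smul, norm_pow, hμn, one_pow, one_mul]
      calc ‖(T ^ n) y‖ ≤ ‖T ^ n‖ * ‖y‖ := (T ^ n).le_opNorm y
      _ ≤ M * ‖y‖ := by
        apply mul_le_mul_of_nonneg_right (hM n) (norm_nonneg y)
    have hbound : ∀ N : ℕ, (N : ℝ) * ‖x‖ ≤ N * (M * ‖x - w‖) + 2 * (M * ‖y‖) := by
      intro N
      have h1 : ‖(N : ℂ) • x‖ = (N : ℝ) * ‖x‖ := by
        rw [norm_smul, Complex.norm_natCast]
      have h2 : (N : ℂ) • x = (∑ n ∈ Finset.range N, μ ^ n • ((T ^ n) (x - w)))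
          + l • (c N - c 0) := by
        rw [hsum]; abel
      have h3 : ‖∑ n ∈ Finset.range N, μ ^ n • ((T ^ n) (x - w))‖
          ≤ N * (M * ‖x - w‖) := by
        calc ‖∑ n ∈ Finset.range N, μ ^ n • ((T ^ n) (x - w))‖
            ≤ ∑ n ∈ Finset.range N, ‖μ ^ n • ((T ^ n) (x - w))‖ :=
              norm_sum_le _ _
        _ ≤ ∑ _n ∈ Finset.range N, M * ‖x - w‖ := by
            apply Finset.sum_le_sum
            intro n _
            rw [norm_smul, norm_pow, hμn, one_pow, one_mul]
            calc ‖(T ^ n) (x - w)‖ ≤ ‖T ^ n‖ * ‖x - w‖ := (T ^ n).le_opNorm _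
            _ ≤ M * ‖x - w‖ :=
              mul_le_mul_of_nonneg_right (hM n) (norm_nonneg _)
        _ = N * (M * ‖x - w‖) := by
            rw [Finset.sum_const, Finset.card_range, nsmul_eq_mul]
      have h4 : ‖l • (c N - c 0)‖ ≤ 2 * (M * ‖y‖) := by
        rw [norm_smul, hl, one_mul]
        calc ‖c N - c 0‖ ≤ ‖c N‖ + ‖c 0‖ := norm_sub_le _ _
        _ ≤ M * ‖y‖ + M * ‖y‖ := add_le_add (hcb N) (hcb 0)
        _ = 2 * (M * ‖y‖) := by ring
      calc (N : ℝ) * ‖x‖ = ‖(N : ℂ) • x‖ := h1.symm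
      _ ≤ ‖∑ n ∈ Finset.range N, μ ^ n • ((T ^ n) (x - w))‖ + ‖l • (c N - c 0)‖ := by
          rw [h2]; exact norm_add_le _ _
      _ ≤ N * (M * ‖x - w‖) + 2 * (M * ‖y‖) := add_le_add h3 h4
    by_contra hcon
    push_neg at hcon
    set ε := ‖x‖ - M * ‖x - w‖ with hε
    have hε0 : 0 < ε := by rw [hε]; linarith
    obtain ⟨N, hN⟩ := exists_nat_gt (2 * (M * ‖y‖) / ε)
    have hNε : 2 * (M * ‖y‖) < N * ε := by
      rw [div_lt_iff₀ hε0] at hN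
      linarith
    have := hbound N
    have : (N : ℝ) * ε ≤ 2 * (M * ‖y‖) := by
      have h := hbound N
      rw [hε]
      nlinarith
    linarith
  -- the closure of the range of (T - l•1) is a proper closed submodule
  set A : H →L[ℂ] H := T - l • (1 : H →L[ℂ] H) with hA
  have hAy : ∀ y : H, A y = T y - l • y := by
    intro y; simp [hA]
  set K : Submodule ℂ H :=
    (LinearMap.range (A : H →ₗ[ℂ] H)).topologicalClosure with hK
  have hxK : x ∉ K := by
    intro hmem
    have hclosed : (x : H) ∈ closure ((LinearMap.range (A : H →ₗ[ℂ] H) : Set H)) := by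
      exact hmem
    rw [Metric.mem_closure_iff] at hclosed
    have hpos : 0 < ‖x‖ / M := div_pos (norm_pos_iff.mpr hx) hM0
    obtain ⟨b, hb, hdist⟩ := hclosed (‖x‖ / M) hpos
    obtain ⟨y, rfl⟩ := hb
    have h1 : ‖x‖ ≤ M * ‖x - (T y - l • y)‖ := hkey y
    simp only [ContinuousLinearMap.coe_coe] at hdist
    rw [dist_eq_norm, hAy] at hdist
    rw [lt_div_iff₀ hM0] at hdist
    -- careful: hdist : ‖x - ...‖ < ‖x‖ / M means M * ‖x - ...‖ < ‖x‖? use lt_div_iff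
    nlinarith [norm_nonneg (x - (T y - l • y))]
  have hKne : K ≠ ⊤ := by
    intro h
    exact hxK (h ▸ Submodule.mem_top)
  have : Kᗮ ≠ ⊥ := by
    intro h
    exact hKne (Submodule.orthogonal_eq_bot_iff.mp h)
  obtain ⟨z, hzK, hz0⟩ := Submodule.exists_mem_ne_zero_of_ne_bot this
  refine ⟨z, hz0, ?_⟩
  apply ext_inner_left ℂ
  intro v
  have hv : ⟪A v, z⟫ = 0 := by
    have hvK : A v ∈ K := by
      apply Submodule.le_topologicalClosure
      exact LinearMap.mem_range_self _ v
    exact (Submodule.mem_orthogonal K z).mp hzK (A v) hvK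
  rw [hAy] at hv
  rw [inner_sub_left, inner_smul_left, sub_eq_zero] at hv
  have h1 : ⟪v, adjoint T z⟫ = ⟪T v, z⟫ := adjoint_inner_right T v z
  rw [h1, hv, inner_smul_right]

theorem stmt_5 {H : Type*} [NormedAddCommGroup H] [InnerProductSpace ℂ H]
    [CompleteSpace H] (T : H →L[ℂ] H) (hT : ∃ M, ∀ n : ℕ, ‖T ^ n‖ ≤ M) :
    {l : ℂ | ∃ x : H, x ≠ 0 ∧ adjoint T x = (starRingEnd ℂ) l • x} ∩
        {l : ℂ | ‖l‖ = 1} =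
      {l : ℂ | ∃ x : H, x ≠ 0 ∧ T x = l • x} ∩ {l : ℂ | ‖l‖ = 1} := by
  obtain ⟨M, hM⟩ := hT
  have hMadj : ∀ n : ℕ, ‖(adjoint T) ^ n‖ ≤ M := by
    intro n
    rw [← star_eq_adjoint, ← star_pow, norm_star]
    exact hM n
  ext l
  simp only [Set.mem_inter_iff, Set.mem_setOf_eq]
  constructor
  · rintro ⟨⟨x, hx, hax⟩, hl⟩
    refine ⟨?_, hl⟩
    have hl' : ‖(starRingEnd ℂ) l‖ = 1 := by rw [RCLike.norm_conj]; exact hl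
    obtain ⟨z, hz0, hz⟩ := stmt_5_key (adjoint T) M hMadj ((starRingEnd ℂ) l) hl' x hx hax
    rw [adjoint_adjoint, Complex.conj_conj] at hz
    exact ⟨z, hz0, hz⟩
  · rintro ⟨⟨x, hx, hax⟩, hl⟩
    refine ⟨?_, hl⟩
    exact stmt_5_key T M hM l hl x hx hax
end

section
/- If T is power bounded on a Hilbert space, then the peripheral spectrum σ(T) ∩ 𝕋 is contained in the union of the point spectrum and the continuous spectrum of T. -/
open ContinuousLinearMap
open scoped InnerProductSpace ComplexConjugate

private lemma clusterEq {u : ℕ → ℂ} {a c : ℂ} (h : MapClusterPt a Filter.atTop u)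
    (hu : Filter.Tendsto u Filter.atTop (nhds c)) : a = c :=
  eq_of_nhds_neBot (h.clusterPt.mono hu)

private lemma keyLemma {H : Type*} [NormedAddCommGroup H] [InnerProductSpace ℂ H]
    [CompleteSpace H] (T : H →L[ℂ] H) {M : ℝ} (hM : ∀ n : ℕ, ‖T ^ n‖ ≤ M)
    {l : ℂ} (hl : ‖l‖ = 1) {x : H} (hx : x ≠ 0)
    (hTx : adjoint T x = conj l • x) : ∃ z : H, z ≠ 0 ∧ T z = l • z := by
  have hM0 : 0 ≤ M := le_trans (norm_nonneg _) (hM 0)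
  have hkl : conj l * l = 1 := by
    rw [mul_comm, Complex.mul_conj]
    norm_cast
    simp [Complex.normSq_eq_norm_sq, hl]
  -- adjoint powers
  have hadjpow : ∀ n : ℕ, (adjoint T ^ n) x = (conj l) ^ n • x := by
    intro n
    induction n with
    | zero => simp
    | succ n ih =>
      rw [pow_succ, ContinuousLinearMap.mul_apply, hTx, map_smul, ih, smul_smul, ← pow_succ']
  have hinner : ∀ n : ℕ, ⟪x, (T ^ n) x⟫_ℂ = l ^ n * ⟪x, x⟫_ℂ := by
    intro n
    have h1 : adjoint (T ^ n) = (adjoint T) ^ n := by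
      rw [← star_eq_adjoint, ← star_eq_adjoint, star_pow]
    rw [← adjoint_inner_left, h1, hadjpow, inner_smul_left]
    simp [map_pow]
  set y : ℕ → H := fun n => (conj l) ^ n • (T ^ n) x with hy
  have hy_inner : ∀ n, ⟪x, y n⟫_ℂ = ⟪x, x⟫_ℂ := by
    intro n
    rw [hy]
    simp only [inner_smul_right, hinner, ← mul_assoc, ← mul_pow, hkl, one_pow, one_mul]
  have hy_norm : ∀ n, ‖y n‖ ≤ M * ‖x‖ := by
    intro n
    rw [hy]
    simp only [norm_smul, norm_pow, RCLike.norm_conj, hl, one_pow, one_mul]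
    exact le_trans ((T ^ n).le_opNorm x) (mul_le_mul_of_nonneg_right (hM n) (norm_nonneg x))
  have hy_T : ∀ n, T (y n) = l • y (n + 1) := by
    intro n
    show T ((conj l) ^ n • (T ^ n) x) = l • ((conj l) ^ (n + 1) • (T ^ (n + 1)) x)
    rw [map_smul, smul_smul, pow_succ' T, ContinuousLinearMap.mul_apply,
      show l * conj l ^ (n + 1) = (conj l * l) * conj l ^ n by ring, hkl, one_mul]
  set z : ℕ → H := fun N => ((N : ℂ))⁻¹ • ∑ n ∈ Finset.range N, y n with hz
  have hz_norm : ∀ N, ‖z N‖ ≤ M * ‖x‖ := by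
    intro N
    rcases Nat.eq_zero_or_pos N with h | h
    · subst h; simp [hz]; positivity
    rw [hz]
    simp only [norm_smul, norm_inv, Complex.norm_natCast]
    calc ((N : ℝ))⁻¹ * ‖∑ n ∈ Finset.range N, y n‖
        ≤ ((N : ℝ))⁻¹ * (N * (M * ‖x‖)) := by
          apply mul_le_mul_of_nonneg_left _ (by positivity)
          calc ‖∑ n ∈ Finset.range N, y n‖ ≤ ∑ n ∈ Finset.range N, ‖y n‖ :=
                norm_sum_le _ _
            _ ≤ ∑ _n ∈ Finset.range N, (M * ‖x‖) :=
                Finset.sum_le_sum fun n _ => hy_norm n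
            _ = N * (M * ‖x‖) := by simp [mul_comm]
      _ = M * ‖x‖ := by
          field_simp
  have hz_inner : ∀ N : ℕ, 1 ≤ N → ⟪x, z N⟫_ℂ = ⟪x, x⟫_ℂ := by
    intro N hN
    rw [hz]
    simp only [inner_smul_right, inner_sum, hy_inner, Finset.sum_const,
      Finset.card_range, nsmul_eq_mul]
    rw [← mul_assoc, inv_mul_cancel₀ (show ((N : ℕ) : ℂ) ≠ 0 from Nat.cast_ne_zero.mpr (by omega)), one_mul]
  -- (6) drift estimate
  have hz_T : ∀ N : ℕ, T (z N) - l • z N = (((N : ℂ))⁻¹ * l) • (y N - y 0) := by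
    intro N
    show T (((N : ℂ))⁻¹ • ∑ n ∈ Finset.range N, y n)
        - l • (((N : ℂ))⁻¹ • ∑ n ∈ Finset.range N, y n) = _
    rw [map_smul, map_sum]
    simp only [hy_T]
    rw [← Finset.smul_sum]
    have hsum : ∑ n ∈ Finset.range N, y (n + 1)
        = (∑ n ∈ Finset.range N, y n) + y N - y 0 := by
      have h1 := Finset.sum_range_succ' (fun n => y n) N
      have h2 := Finset.sum_range_succ (fun n => y n) N
      rw [h2] at h1
      exact eq_sub_of_add_eq h1.symm
    rw [hsum]
    simp only [smul_smul]
    rw [mul_comm l, ← smul_sub]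
    congr 1
    abel
  have hG : Filter.Tendsto (fun N : ℕ => (N : ℝ)⁻¹ * (2 * (M * ‖x‖))) Filter.atTop (nhds 0) := by
    simpa using (tendsto_inv_atTop_nhds_zero_nat (𝕜 := ℝ)).mul_const (2 * (M * ‖x‖))
  have htend : Filter.Tendsto (fun N => T (z N) - l • z N) Filter.atTop (nhds 0) := by
    refine squeeze_zero_norm (fun N => ?_) hG
    rw [hz_T, norm_smul, norm_mul, norm_inv, Complex.norm_natCast, hl, mul_one]
    exact mul_le_mul_of_nonneg_left
      ((norm_sub_le _ _).trans (by linarith [hy_norm N, hy_norm 0])) (by positivity)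
  clear_value y z
  -- weak cluster point
  set u : ℕ → WeakDual ℂ H :=
    fun N => StrongDual.toWeakDual (InnerProductSpace.toDual ℂ H (z N)) with hu
  have hc := WeakDual.isCompact_closedBall (𝕜 := ℂ) (E := H) 0 (M * ‖x‖)
  have hle : Filter.map u Filter.atTop
      ≤ Filter.principal (WeakDual.toStrongDual ⁻¹' Metric.closedBall 0 (M * ‖x‖)) := by
    rw [Filter.le_principal_iff, Filter.mem_map]
    refine Filter.univ_mem' fun N => ?_
    simp only [Set.mem_preimage, hu, Metric.mem_closedBall, dist_zero_right]
    calc ‖WeakDual.toStrongDual (StrongDual.toWeakDual (InnerProductSpace.toDual ℂ H (z N)))‖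
        = ‖InnerProductSpace.toDual ℂ H (z N)‖ := rfl
      _ = ‖z N‖ := (InnerProductSpace.toDual ℂ H).norm_map _
      _ ≤ M * ‖x‖ := hz_norm N
  obtain ⟨g, -, hg⟩ := hc.exists_mapClusterPt hle
  set w : H := (InnerProductSpace.toDual ℂ H).symm (WeakDual.toStrongDual g) with hw
  have hgw : ∀ v : H, ⟪w, v⟫_ℂ = g v := fun v => InnerProductSpace.toDual_symm_apply
  have hcl : ∀ v : H, MapClusterPt (g v) Filter.atTop (fun N => ⟪z N, v⟫_ℂ) := by
    intro v
    have hcont : ContinuousAt (fun φ : WeakDual ℂ H => φ v) g :=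
      (WeakDual.eval_continuous v).continuousAt
    exact hg.continuousAt_comp hcont
  have ha : ⟪x, x⟫_ℂ ≠ 0 := inner_self_ne_zero.mpr hx
  have hwx : ⟪w, x⟫_ℂ = conj ⟪x, x⟫_ℂ := by
    rw [hgw]
    refine clusterEq (hcl x) ?_
    refine Filter.Tendsto.congr' ?_ tendsto_const_nhds
    filter_upwards [Filter.eventually_ge_atTop 1] with N hN
    rw [← hz_inner N hN, inner_conj_symm]
  have hwne : w ≠ 0 := by
    intro h
    rw [h, inner_zero_left] at hwx
    exact ha (by simpa using hwx.symm)
  refine ⟨w, hwne, ?_⟩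
  have hkey : ∀ v : H, ⟪T w - l • w, v⟫_ℂ = 0 := by
    intro v
    have hcont : ContinuousAt (fun φ : WeakDual ℂ H => φ (adjoint T v) - conj l * φ v) g :=
      ((WeakDual.eval_continuous (adjoint T v)).sub
        (continuous_const.mul (WeakDual.eval_continuous v))).continuousAt
    have h2 := hg.continuousAt_comp hcont
    have heq : ((fun φ : WeakDual ℂ H => φ (adjoint T v) - conj l * φ v) ∘ u)
        = fun N => ⟪T (z N) - l • z N, v⟫_ℂ := by
      funext N
      show ⟪z N, adjoint T v⟫_ℂ - conj l * ⟪z N, v⟫_ℂ = _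
      rw [inner_sub_left, adjoint_inner_right, inner_smul_left]
    rw [heq] at h2
    have h3 : Filter.Tendsto (fun N => ⟪T (z N) - l • z N, v⟫_ℂ) Filter.atTop (nhds 0) := by
      simpa only [inner_zero_left] using htend.inner (𝕜 := ℂ) (tendsto_const_nhds (x := v))
    have h4 := clusterEq h2 h3
    rw [inner_sub_left, inner_smul_left, ← adjoint_inner_right, hgw, hgw]
    exact h4
  have := hkey (T w - l • w)
  rw [inner_self_eq_zero] at this
  exact sub_eq_zero.mp this

theorem stmt_6 {H : Type*} [NormedAddCommGroup H] [InnerProductSpace ℂ H]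
    [CompleteSpace H] (T : H →L[ℂ] H) (hT : ∃ M, ∀ n : ℕ, ‖T ^ n‖ ≤ M) :
    spectrum ℂ T ∩ {l : ℂ | ‖l‖ = 1} ⊆
      {l : ℂ | ∃ x : H, x ≠ 0 ∧ T x = l • x} ∪
        (spectrum ℂ T \
          ({l : ℂ | ∃ x : H, x ≠ 0 ∧ T x = l • x} ∪
            ({l : ℂ | ∃ x : H, x ≠ 0 ∧ adjoint T x = (starRingEnd ℂ) l • x} \
              {l : ℂ | ∃ x : H, x ≠ 0 ∧ T x = l • x}))) := by
  rintro l ⟨hσ, hl⟩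
  by_cases hp : l ∈ {l : ℂ | ∃ x : H, x ≠ 0 ∧ T x = l • x}
  · exact Or.inl hp
  · refine Or.inr ⟨hσ, ?_⟩
    rintro (h | ⟨⟨x, hx, hTx⟩, -⟩)
    · exact hp h
    · obtain ⟨M, hM⟩ := hT
      obtain ⟨z, hz0, hz⟩ := keyLemma T hM hl hx hTx
      exact hp ⟨z, hz0, hz⟩
end

section
/- If T is similar to a power bounded operator (i.e., T = W S W⁻¹ with W invertible and S power bounded), then the residual spectrum of T is contained in the open unit disk. -/
open ContinuousLinearMap

open Filter Finset in
private lemma clusterPt_map_eq {α : Type*} [TopologicalSpace α] [T2Space α] {u : ℕ → α}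
    {a b : α} (h : ClusterPt a (Filter.map u Filter.atTop))
    (h' : Filter.Tendsto u Filter.atTop (nhds b)) : a = b :=
  eq_of_nhds_neBot (h.mono h')

open Filter Finset in
private lemma exists_eigenvector_of_unimodular {H : Type*} [NormedAddCommGroup H]
    [InnerProductSpace ℂ H] [CompleteSpace H] (T : H →L[ℂ] H) (M : ℝ)
    (hM : ∀ n : ℕ, ‖T ^ n‖ ≤ M) (l : ℂ) (hl : ‖l‖ = 1) (x : H) (hx : x ≠ 0)
    (hTx : adjoint T x = (starRingEnd ℂ) l • x) :
    ∃ z : H, z ≠ 0 ∧ T z = l • z := by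
  set c : ℂ := (starRingEnd ℂ) l with hc_def
  have hlc : l * c = 1 := by
    rw [hc_def, Complex.mul_conj]
    norm_cast
    rw [Complex.normSq_eq_norm_sq, hl, one_pow]
  have hM0 : 0 ≤ M := le_trans (norm_nonneg _) (hM 0)
  have hx_norm : (0:ℝ) < ‖x‖ := norm_pos_iff.mpr hx
  -- adjoint powers fix x up to scalar
  have hpow : ∀ k : ℕ, adjoint (T ^ k) x = c ^ k • x := by
    intro k
    rw [← ContinuousLinearMap.star_eq_adjoint, star_pow]
    induction k with
    | zero => simp
    | succ n ih =>
      rw [pow_succ', ContinuousLinearMap.mul_apply, ih, map_smul,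
        ContinuousLinearMap.star_eq_adjoint, hTx, smul_smul, ← pow_succ]
  -- the orbit sequence
  set a : ℕ → H := fun k => c ^ k • ((T ^ k) x) with ha_def
  set z : ℕ → H := fun n => ((n : ℂ))⁻¹ • ∑ k ∈ Finset.range n, a k with hz_def
  have ha_norm : ∀ k, ‖a k‖ ≤ M * ‖x‖ := by
    intro k
    rw [ha_def]
    simp only [norm_smul, norm_pow, hc_def]
    rw [RCLike.norm_conj, hl, one_pow, one_mul]
    exact le_trans ((T ^ k).le_opNorm x) (mul_le_mul_of_nonneg_right (hM k) (norm_nonneg x))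
  have hz_norm : ∀ n, ‖z n‖ ≤ M * ‖x‖ := by
    intro n
    rcases Nat.eq_zero_or_pos n with h0 | hn
    · simp [hz_def, h0]; positivity
    · rw [hz_def]
      simp only [norm_smul, norm_inv, Complex.norm_natCast]
      have hsum : ‖∑ k ∈ Finset.range n, a k‖ ≤ (n : ℝ) * (M * ‖x‖) := by
        refine le_trans (norm_sum_le _ _) ?_
        have := Finset.sum_le_card_nsmul (Finset.range n) (fun k => ‖a k‖) (M * ‖x‖)
          (fun k _ => ha_norm k)
        simpa [nsmul_eq_mul] using this
      calc ((n:ℝ))⁻¹ * ‖∑ k ∈ Finset.range n, a k‖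
          ≤ ((n:ℝ))⁻¹ * ((n:ℝ) * (M * ‖x‖)) := by
            exact mul_le_mul_of_nonneg_left hsum (by positivity)
        _ = M * ‖x‖ := by
            field_simp
  have ha_inner : ∀ k, (inner ℂ (a k) x : ℂ) = (‖x‖ : ℂ) ^ 2 := by
    intro k
    rw [ha_def]
    simp only [inner_smul_left, map_pow]
    have h1 : (inner ℂ ((T ^ k) x) x : ℂ) = c ^ k * inner ℂ x x := by
      rw [← ContinuousLinearMap.adjoint_inner_right, hpow, inner_smul_right]
    rw [h1, hc_def, Complex.conj_conj, ← mul_assoc, ← mul_pow, hlc, one_pow, one_mul,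
      inner_self_eq_norm_sq_to_K]
    norm_num
  have hz_inner : ∀ n : ℕ, 1 ≤ n → (inner ℂ (z n) x : ℂ) = (‖x‖ : ℂ) ^ 2 := by
    intro n hn
    rw [hz_def]
    simp only [inner_smul_left, sum_inner, ha_inner, Finset.sum_const, Finset.card_range,
      nsmul_eq_mul, map_inv₀, Complex.conj_natCast]
    have hn0 : ((n : ℂ)) ≠ 0 := Nat.cast_ne_zero.mpr (by omega)
    field_simp
  -- key recurrence
  have hTa : ∀ k, T (a k) = l • a (k + 1) := by
    intro k
    simp only [ha_def, map_smul, smul_smul]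
    have h2 : l * c ^ (k + 1) = c ^ k := by
      rw [pow_succ', ← mul_assoc, hlc, one_mul]
    rw [h2]
    congr 1
    rw [pow_succ', ContinuousLinearMap.mul_apply]
  have hdiff : ∀ n : ℕ, T (z n) - l • z n = ((n : ℂ))⁻¹ • (l • (a n - a 0)) := by
    intro n
    have hsum : ∑ k ∈ Finset.range n, T (a k)
        = l • ((∑ k ∈ Finset.range n, a k) + (a n - a 0)) := by
      have h1 : ∑ k ∈ Finset.range n, T (a k) = ∑ k ∈ Finset.range n, l • a (k + 1) :=
        Finset.sum_congr rfl fun k _ => hTa k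
      rw [h1, ← Finset.smul_sum]
      congr 1
      have h2 := Finset.sum_range_sub a n
      rw [Finset.sum_sub_distrib] at h2
      rw [← h2]
      abel
    simp only [hz_def, map_smul, map_sum]
    rw [hsum]
    module
  have hdiff_tendsto : Tendsto (fun n => T (z n) - l • z n) atTop (nhds (0 : H)) := by
    have hb : Tendsto (fun n : ℕ => ((n:ℝ))⁻¹ * (2 * (M * ‖x‖))) atTop (nhds 0) := by
      have := (tendsto_inv_atTop_nhds_zero_nat (𝕜 := ℝ)).mul_const (2 * (M * ‖x‖))
      simpa using this
    refine squeeze_zero_norm (fun n => ?_) hb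
    rw [hdiff]
    simp only [norm_smul, norm_inv, Complex.norm_natCast, hl, one_mul]
    refine mul_le_mul_of_nonneg_left ?_ (by positivity)
    calc ‖a n - a 0‖ ≤ ‖a n‖ + ‖a 0‖ := norm_sub_le _ _
      _ ≤ M * ‖x‖ + M * ‖x‖ := add_le_add (ha_norm n) (ha_norm 0)
      _ = 2 * (M * ‖x‖) := by ring
  clear_value a z
  -- weak-* compactness
  set D := InnerProductSpace.toDual ℂ H with hD_def
  set φ : ℕ → WeakDual ℂ H := fun n => StrongDual.toWeakDual (D (z n)) with hφ_def
  have hφ_apply : ∀ n (w : H), φ n w = (inner ℂ (z n) w : ℂ) := fun n w => by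
    rw [hφ_def]; exact InnerProductSpace.toDual_apply_apply
  set K : Set (WeakDual ℂ H) := WeakDual.toStrongDual ⁻¹' Metric.closedBall 0 (M * ‖x‖)
    with hK_def
  have hK : IsCompact K := WeakDual.isCompact_closedBall 0 (M * ‖x‖)
  have hφK : ∀ n, φ n ∈ K := by
    intro n
    rw [hK_def]
    simp only [Set.mem_preimage, Metric.mem_closedBall, dist_zero_right]
    have : ‖WeakDual.toStrongDual (φ n)‖ = ‖z n‖ := by
      rw [hφ_def]
      exact D.norm_map (z n)
    rw [this]
    exact hz_norm n
  have hFle : Filter.map φ Filter.atTop ≤ Filter.principal K :=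
    Filter.le_principal_iff.mpr (Filter.mem_map.mpr (Filter.Eventually.of_forall hφK))
  obtain ⟨ψ, hψK, hψ⟩ := hK.exists_clusterPt hFle
  -- the limit vector
  set zi : H := D.symm (WeakDual.toStrongDual ψ) with hzi_def
  have hzi_apply : ∀ w : H, (inner ℂ zi w : ℂ) = ψ w := by
    intro w
    rw [hzi_def, ← InnerProductSpace.toDual_apply_apply (𝕜 := ℂ)]
    rw [LinearIsometryEquiv.apply_symm_apply]
    rfl
  have heval : ∀ w : H, ClusterPt (ψ w)
      (Filter.map (fun n => (inner ℂ (z n) w : ℂ)) Filter.atTop) := by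
    intro w
    have hcont : ContinuousAt (fun q : WeakDual ℂ H => q w) ψ :=
      (WeakDual.eval_continuous w).continuousAt
    have htend : Tendsto (fun q : WeakDual ℂ H => q w) (Filter.map φ Filter.atTop)
        (Filter.map (fun n => (inner ℂ (z n) w : ℂ)) Filter.atTop) := by
      rw [Filter.tendsto_map'_iff]
      have : ((fun q : WeakDual ℂ H => q w) ∘ φ) = fun n => (inner ℂ (z n) w : ℂ) := by
        funext n; exact hφ_apply n w
      rw [this]
      exact Filter.tendsto_map
    exact hψ.map hcont htend
  -- zi is nonzero
  have hzi_x : (inner ℂ zi x : ℂ) = (‖x‖ : ℂ) ^ 2 := by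
    rw [hzi_apply]
    refine clusterPt_map_eq (heval x) ?_
    refine Tendsto.congr' ?_ (tendsto_const_nhds (x := ((‖x‖ : ℂ) ^ 2)))
    filter_upwards [eventually_ge_atTop 1] with n hn
    exact (hz_inner n hn).symm
  have hzi_ne : zi ≠ 0 := by
    intro h
    rw [h, inner_zero_left] at hzi_x
    have : (‖x‖ : ℂ) ^ 2 ≠ 0 := by
      simp only [ne_eq, pow_eq_zero_iff, Complex.ofReal_eq_zero, OfNat.ofNat_ne_zero,
        not_false_eq_true, and_true]
      exact ne_of_gt hx_norm
    exact this hzi_x.symm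
  -- zi is an eigenvector
  refine ⟨zi, hzi_ne, ?_⟩
  have key : ∀ u : H, (inner ℂ (T zi - l • zi) u : ℂ) = 0 := by
    intro u
    have h1 : (inner ℂ zi (adjoint T u - c • u) : ℂ) = 0 := by
      rw [hzi_apply]
      refine clusterPt_map_eq (heval _) ?_
      have hseq : ∀ n, (inner ℂ (z n) (adjoint T u - c • u) : ℂ)
          = inner ℂ (T (z n) - l • z n) u := by
        intro n
        have e1 : (inner ℂ (T (z n) - l • z n) u : ℂ)
            = inner ℂ (T (z n)) u - c * inner ℂ (z n) u := by
          rw [inner_sub_left, inner_smul_left, ← hc_def]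
        have e2 : (inner ℂ (z n) (adjoint T u - c • u) : ℂ)
            = inner ℂ (T (z n)) u - c * inner ℂ (z n) u := by
          rw [inner_sub_right, inner_smul_right, ContinuousLinearMap.adjoint_inner_right]
        rw [e1, e2]
      have := Tendsto.inner (𝕜 := ℂ) hdiff_tendsto (tendsto_const_nhds (x := u))
      rw [inner_zero_left] at this
      exact Tendsto.congr (fun n => (hseq n).symm) this
    rw [inner_sub_right, inner_smul_right, ContinuousLinearMap.adjoint_inner_right] at h1
    rw [inner_sub_left, inner_smul_left, ← hc_def]
    exact h1
  have : T zi - l • zi = 0 := by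
    refine ext_inner_right ℂ fun v => ?_
    rw [key v, inner_zero_left]
  linear_combination (norm := module) this

theorem stmt_7 {H : Type*} [NormedAddCommGroup H] [InnerProductSpace ℂ H]
    [CompleteSpace H] (T S : H →L[ℂ] H) (W : (H →L[ℂ] H)ˣ)
    (hS : ∃ M, ∀ n : ℕ, ‖S ^ n‖ ≤ M) (hTS : T = (W : H →L[ℂ] H) * S * ((W⁻¹ : (H →L[ℂ] H)ˣ) : H →L[ℂ] H)) :
    {l : ℂ | ∃ x : H, x ≠ 0 ∧ adjoint T x = (starRingEnd ℂ) l • x} \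
      {l : ℂ | ∃ x : H, x ≠ 0 ∧ T x = l • x} ⊆ Metric.ball (0 : ℂ) 1 := by
  obtain ⟨M, hM⟩ := hS
  intro l hl
  obtain ⟨⟨x, hx, hTx⟩, hl2⟩ := hl
  -- T is power bounded
  have hTn : ∀ n : ℕ, T ^ n = (W : H →L[ℂ] H) * S ^ n * ((W⁻¹ : (H →L[ℂ] H)ˣ) : H →L[ℂ] H) := by
    intro n
    induction n with
    | zero => simp [Units.mul_inv]
    | succ n ih =>
      rw [pow_succ, ih, hTS]
      have h1 : ((W⁻¹ : (H →L[ℂ] H)ˣ) : H →L[ℂ] H) * ((W : H →L[ℂ] H) * (S *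
          ((W⁻¹ : (H →L[ℂ] H)ˣ) : H →L[ℂ] H))) = S * ((W⁻¹ : (H →L[ℂ] H)ˣ) : H →L[ℂ] H) := by
        rw [← mul_assoc, ← Units.val_mul, inv_mul_cancel, Units.val_one, one_mul]
      calc (W : H →L[ℂ] H) * S ^ n * ((W⁻¹ : (H →L[ℂ] H)ˣ) : H →L[ℂ] H) *
            ((W : H →L[ℂ] H) * S * ((W⁻¹ : (H →L[ℂ] H)ˣ) : H →L[ℂ] H))
          = (W : H →L[ℂ] H) * (S ^ n * (((W⁻¹ : (H →L[ℂ] H)ˣ) : H →L[ℂ] H) *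
            ((W : H →L[ℂ] H) * (S * ((W⁻¹ : (H →L[ℂ] H)ˣ) : H →L[ℂ] H))))) := by
            simp only [mul_assoc]
        _ = (W : H →L[ℂ] H) * (S ^ n * (S * ((W⁻¹ : (H →L[ℂ] H)ˣ) : H →L[ℂ] H))) := by rw [h1]
        _ = (W : H →L[ℂ] H) * S ^ (n + 1) * ((W⁻¹ : (H →L[ℂ] H)ˣ) : H →L[ℂ] H) := by
            rw [← mul_assoc, ← mul_assoc, mul_assoc ((W : H →L[ℂ] H)) (S ^ n) S, ← pow_succ]
  set M' : ℝ := ‖(W : H →L[ℂ] H)‖ * M * ‖((W⁻¹ : (H →L[ℂ] H)ˣ) : H →L[ℂ] H)‖ with hM'_def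
  have hM0 : 0 ≤ M := le_trans (norm_nonneg _) (hM 0)
  have hM' : ∀ n : ℕ, ‖T ^ n‖ ≤ M' := by
    intro n
    rw [hTn n, hM'_def]
    calc ‖(W : H →L[ℂ] H) * S ^ n * ((W⁻¹ : (H →L[ℂ] H)ˣ) : H →L[ℂ] H)‖
        ≤ ‖(W : H →L[ℂ] H) * S ^ n‖ * ‖((W⁻¹ : (H →L[ℂ] H)ˣ) : H →L[ℂ] H)‖ := norm_mul_le _ _
      _ ≤ (‖(W : H →L[ℂ] H)‖ * ‖S ^ n‖) * ‖((W⁻¹ : (H →L[ℂ] H)ˣ) : H →L[ℂ] H)‖ :=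
          mul_le_mul_of_nonneg_right (norm_mul_le _ _) (norm_nonneg _)
      _ ≤ (‖(W : H →L[ℂ] H)‖ * M) * ‖((W⁻¹ : (H →L[ℂ] H)ˣ) : H →L[ℂ] H)‖ := by
          refine mul_le_mul_of_nonneg_right ?_ (norm_nonneg _)
          exact mul_le_mul_of_nonneg_left (hM n) (norm_nonneg _)
  have hx_norm : (0:ℝ) < ‖x‖ := norm_pos_iff.mpr hx
  -- adjoint powers fix x up to scalar
  have hpow : ∀ k : ℕ, adjoint (T ^ k) x = ((starRingEnd ℂ) l) ^ k • x := by
    intro k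
    rw [← ContinuousLinearMap.star_eq_adjoint, star_pow]
    induction k with
    | zero => simp
    | succ n ih =>
      rw [pow_succ', ContinuousLinearMap.mul_apply, ih, map_smul,
        ContinuousLinearMap.star_eq_adjoint, hTx, smul_smul, ← pow_succ]
  -- norm of l is at most 1
  have hle : ‖l‖ ≤ 1 := by
    by_contra h
    push_neg at h
    obtain ⟨n, hn⟩ := pow_unbounded_of_one_lt M' h
    have h1 : ‖adjoint (T ^ n) x‖ = ‖l‖ ^ n * ‖x‖ := by
      rw [hpow n, norm_smul, norm_pow, RCLike.norm_conj]
    have h2 : ‖adjoint (T ^ n) x‖ ≤ M' * ‖x‖ := by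
      calc ‖adjoint (T ^ n) x‖ ≤ ‖adjoint (T ^ n)‖ * ‖x‖ := (adjoint (T ^ n)).le_opNorm x
        _ = ‖T ^ n‖ * ‖x‖ := by
            rw [← ContinuousLinearMap.star_eq_adjoint, norm_star]
        _ ≤ M' * ‖x‖ := mul_le_mul_of_nonneg_right (hM' n) (norm_nonneg _)
    rw [h1] at h2
    have := le_of_mul_le_mul_right h2 hx_norm
    exact absurd this (not_le.mpr hn)
  -- norm of l is not 1
  have hne : ‖l‖ ≠ 1 := by
    intro h1
    obtain ⟨z, hz, hTz⟩ := exists_eigenvector_of_unimodular T M' hM' l h1 x hx hTx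
    exact hl2 ⟨z, hz, hTz⟩
  rw [Metric.mem_ball, dist_zero_right]
  exact lt_of_le_of_ne hle hne
end

section
/- For a bounded operator T on a Hilbert space, the range of I − T is contained in M(T) = {u ∈ H : sup_n ‖∑_{k=0}^n T^k u‖ < ∞} if and only if T is power bounded. -/
lemma telescope_aux {H : Type*} [NormedAddCommGroup H] [InnerProductSpace ℂ H]
    (T : H →L[ℂ] H) (x : H) (n : ℕ) :
    ∑ k ∈ Finset.range (n + 1), (T ^ k) (x - T x) = x - (T ^ (n + 1)) x := by
  have : ∀ k : ℕ, (T ^ k) (x - T x) = (T ^ k) x - (T ^ (k + 1)) x := by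
    intro k
    rw [map_sub, pow_succ, ContinuousLinearMap.mul_apply]
  simp_rw [this]
  rw [Finset.sum_range_sub' (fun k => (T ^ k) x)]
  simp

theorem stmt_8 {H : Type*} [NormedAddCommGroup H] [InnerProductSpace ℂ H]
    [CompleteSpace H] (T : H →L[ℂ] H) :
    (Set.range (fun x : H => x - T x) ⊆
        {u : H | ∃ C, ∀ n : ℕ, ‖∑ k ∈ Finset.range (n + 1), (T ^ k) u‖ ≤ C}) ↔
      ∃ M, ∀ n : ℕ, ‖T ^ n‖ ≤ M := by
  constructor
  · intro h
    apply banach_steinhaus (g := fun n : ℕ => T ^ n)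
    intro x
    obtain ⟨C, hC⟩ := h (Set.mem_range_self x)
    have hC0 : 0 ≤ C := le_trans (norm_nonneg _) (hC 0)
    refine ⟨C + ‖x‖, fun n => ?_⟩
    cases n with
    | zero => simp only [pow_zero, ContinuousLinearMap.one_apply]; linarith
    | succ m =>
      have := hC m
      rw [telescope_aux] at this
      calc ‖(T ^ (m + 1)) x‖ = ‖x - (x - (T ^ (m + 1)) x)‖ := by rw [sub_sub_cancel]
        _ ≤ ‖x‖ + ‖x - (T ^ (m + 1)) x‖ := norm_sub_le _ _
        _ ≤ ‖x‖ + C := by linarith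
        _ = C + ‖x‖ := by ring
  · rintro ⟨M, hM⟩ u ⟨x, rfl⟩
    refine ⟨‖x‖ + M * ‖x‖, fun n => ?_⟩
    rw [telescope_aux]
    calc ‖x - (T ^ (n + 1)) x‖ ≤ ‖x‖ + ‖(T ^ (n + 1)) x‖ := norm_sub_le _ _
      _ ≤ ‖x‖ + M * ‖x‖ := by
          have := (T ^ (n + 1)).le_of_opNorm_le (hM (n + 1)) x
          linarith
end

section
/- M(T) is not contained in R(I − T) if and only if there exists a nonzero bounded operator L on H with R(L) ∩ R(I − T) = {0} and R(L) ⊆ M(T). -/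
theorem stmt_12 {H : Type*} [NormedAddCommGroup H] [InnerProductSpace ℂ H]
    [CompleteSpace H] (T : H →L[ℂ] H) :
    ¬({u : H | ∃ C, ∀ n : ℕ, ‖∑ k ∈ Finset.range (n + 1), (T ^ k) u‖ ≤ C} ⊆
        Set.range (fun x : H => x - T x)) ↔
      ∃ L : H →L[ℂ] H, L ≠ 0 ∧
        Set.range L ∩ Set.range (fun x : H => x - T x) = {0} ∧
        Set.range L ⊆
          {u : H | ∃ C, ∀ n : ℕ, ‖∑ k ∈ Finset.range (n + 1), (T ^ k) u‖ ≤ C} := by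
  constructor
  · intro h
    obtain ⟨u, huM, huR⟩ := Set.not_subset.mp h
    have hu0 : u ≠ 0 := by
      rintro rfl; exact huR ⟨0, by simp⟩
    refine ⟨(innerSL ℂ u).smulRight u, ?_, ?_, ?_⟩
    · intro hL
      have : (inner ℂ u u : ℂ) • u = 0 := by
        have := congrArg (fun f : H →L[ℂ] H => f u) hL
        simpa using this
      rcases smul_eq_zero.mp this with h1 | h1
      · exact hu0 (inner_self_eq_zero.mp h1)
      · exact hu0 h1
    · ext y
      simp only [Set.mem_inter_iff, Set.mem_range, Set.mem_singleton_iff]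
      constructor
      · rintro ⟨⟨x, hx⟩, z, hz⟩
        simp only [ContinuousLinearMap.smulRight_apply, innerSL_apply_apply] at hx
        by_cases hc : (inner ℂ u x : ℂ) = 0
        · rw [← hx, hc, zero_smul]
        · exfalso
          apply huR
          refine ⟨(inner ℂ u x : ℂ)⁻¹ • z, ?_⟩
          simp only [map_smul, ← smul_sub]
          rw [hz, ← hx, smul_smul, inv_mul_cancel₀ hc, one_smul]
      · rintro rfl
        exact ⟨⟨0, by simp⟩, 0, by simp⟩
    · rintro y ⟨x, rfl⟩
      obtain ⟨C, hC⟩ := huM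
      refine ⟨‖(inner ℂ u x : ℂ)‖ * C, fun n => ?_⟩
      simp only [ContinuousLinearMap.smulRight_apply, innerSL_apply_apply, map_smul,
        ← Finset.smul_sum, norm_smul]
      exact mul_le_mul_of_nonneg_left (hC n) (norm_nonneg _)
  · rintro ⟨L, hL0, hInt, hM⟩ hsub
    apply hL0
    ext x
    have hx : L x ∈ Set.range L ∩ Set.range (fun x : H => x - T x) :=
      ⟨⟨x, rfl⟩, hsub (hM ⟨x, rfl⟩)⟩
    rw [hInt] at hx
    simpa using hx
end

section
/- For bounded operators L and T on a Hilbert space, the range of L is contained in M(T) = {u : sup_n ‖∑_{k=0}^n T^k u‖ < ∞} if and only if sup_n ‖∑_{k=0}^n T^k L‖ < ∞ in the operator norm. -/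
theorem stmt_13 {H : Type*} [NormedAddCommGroup H] [InnerProductSpace ℂ H]
    [CompleteSpace H] (L T : H →L[ℂ] H) :
    (Set.range L ⊆
        {u : H | ∃ C, ∀ n : ℕ, ‖∑ k ∈ Finset.range (n + 1), (T ^ k) u‖ ≤ C}) ↔
      ∃ C, ∀ n : ℕ, ‖∑ k ∈ Finset.range (n + 1), T ^ k * L‖ ≤ C := by
  constructor
  · intro h
    have key : ∀ x : H, ∃ C, ∀ n : ℕ,
        ‖(∑ k ∈ Finset.range (n + 1), T ^ k * L) x‖ ≤ C := by
      intro x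
      obtain ⟨C, hC⟩ := h ⟨x, rfl⟩
      exact ⟨C, fun n => by simpa [ContinuousLinearMap.sum_apply] using hC n⟩
    obtain ⟨C, hC⟩ := banach_steinhaus
      (g := fun n : ℕ => ∑ k ∈ Finset.range (n + 1), T ^ k * L) key
    exact ⟨C, hC⟩
  · rintro ⟨C, hC⟩ u ⟨x, rfl⟩
    refine ⟨C * ‖x‖, fun n => ?_⟩
    have := (∑ k ∈ Finset.range (n + 1), T ^ k * L).le_opNorm x
    have h2 : ‖(∑ k ∈ Finset.range (n + 1), T ^ k * L) x‖ ≤ C * ‖x‖ :=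
      this.trans (mul_le_mul_of_nonneg_right (hC n) (norm_nonneg x))
    simpa [ContinuousLinearMap.sum_apply] using h2
end

section
/- Let T be a power bounded operator on a Hilbert space with spectral radius r(T) = 1, and let L be an injective bounded operator commuting with T such that ‖T^n L‖ → 0. Then the peripheral spectrum σ(T) ∩ 𝕋 is nonempty and is contained in the continuous spectrum of T. -/
open ContinuousLinearMap

open ContinuousLinearMap Filter InnerProductSpace Finset

local notation "⟪" x ", " y "⟫" => @inner ℂ _ _ x y

/-- If `T` is power bounded, `‖l‖ = 1`, and `T` has no eigenvector for `l`, then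
`adjoint T` has no eigenvector for `conj l`. -/
lemma stmt16_aux {H : Type*} [NormedAddCommGroup H] [InnerProductSpace ℂ H]
    [CompleteSpace H] (T : H →L[ℂ] H) (M : ℝ) (hM : ∀ n : ℕ, ‖T ^ n‖ ≤ M)
    (l : ℂ) (hl : ‖l‖ = 1) (heig : ∀ y : H, T y = l • y → y = 0)
    (x : H) (hx : adjoint T x = (starRingEnd ℂ) l • x) : x = 0 := by
  by_contra hx0
  have hM0 : 0 ≤ M := le_trans (norm_nonneg _) (hM 0)
  set c : ℂ := (starRingEnd ℂ) l with hc
  have hcnorm : ‖c‖ = 1 := by simpa [hc] using hl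
  have hlc : l * c = 1 := by
    rw [hc, Complex.mul_conj]
    norm_cast
    simp [Complex.normSq_eq_norm_sq, hl]
  have hcl : c * l = 1 := by rw [mul_comm]; exact hlc
  set g : ℕ → H := fun k => c ^ k • ((T ^ k) x) with hg
  have hgnorm : ∀ k, ‖g k‖ ≤ M * ‖x‖ := by
    intro k
    calc ‖g k‖ = ‖c‖ ^ k * ‖(T ^ k) x‖ := by rw [hg]; simp [norm_smul]
    _ ≤ 1 * (‖T ^ k‖ * ‖x‖) := by
        rw [hcnorm, one_pow]; simpa using (T ^ k).le_opNorm x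
    _ ≤ M * ‖x‖ := by
        rw [one_mul]; exact mul_le_mul_of_nonneg_right (hM k) (norm_nonneg x)
  have hsucc : ∀ k, g (k + 1) = c • T (g k) := by
    intro k
    rw [hg]
    simp only [pow_succ', mul_apply_eq_comp, map_smul, smul_smul]
  have hg0 : g 0 = x := by simp [hg]
  set A : ℕ → H := fun n => ((n : ℂ))⁻¹ • ∑ k ∈ Finset.range n, g k with hA
  have hA_norm : ∀ n, ‖A n‖ ≤ M * ‖x‖ := by
    intro n
    rcases n with _ | n
    · simp only [hA]
      simp only [Nat.cast_zero, inv_zero, zero_smul, norm_zero]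
      positivity
    · rw [hA]
      simp only [norm_smul, norm_inv, Complex.norm_natCast]
      have hsum : ‖∑ k ∈ Finset.range (n + 1), g k‖ ≤ ((n + 1 : ℕ) : ℝ) * (M * ‖x‖) := by
        calc ‖∑ k ∈ Finset.range (n + 1), g k‖ ≤ ∑ k ∈ Finset.range (n + 1), ‖g k‖ :=
            norm_sum_le _ _
        _ ≤ ((n + 1 : ℕ) : ℝ) * (M * ‖x‖) := by
            have h := Finset.sum_le_card_nsmul (Finset.range (n + 1)) (fun k => ‖g k‖)
              (M * ‖x‖) fun k _ => hgnorm k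
            simp only [Finset.card_range, nsmul_eq_mul] at h
            exact h
      calc (((n + 1 : ℕ) : ℝ))⁻¹ * ‖∑ k ∈ Finset.range (n + 1), g k‖
          ≤ (((n + 1 : ℕ) : ℝ))⁻¹ * (((n + 1 : ℕ) : ℝ) * (M * ‖x‖)) :=
            mul_le_mul_of_nonneg_left hsum (by positivity)
        _ = M * ‖x‖ := by
            rw [← mul_assoc, inv_mul_cancel₀ (by positivity), one_mul]
  have hadjpow : ∀ k : ℕ, adjoint (T ^ k) = (adjoint T) ^ k := by
    intro k
    rw [← star_eq_adjoint, ← star_eq_adjoint, star_pow]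
  have hadjvec : ∀ k : ℕ, ((adjoint T) ^ k) x = c ^ k • x := by
    intro k
    induction k with
    | zero => simp
    | succ k ih =>
      rw [pow_succ', mul_apply_eq_comp, ih, map_smul, hx, smul_smul, ← pow_succ]
  have hterm : ∀ k, ⟪g k, x⟫ = ⟪x, x⟫ := by
    intro k
    have h1 : ⟪(T ^ k) x, x⟫ = c ^ k * ⟪x, x⟫ := by
      rw [← adjoint_inner_right, hadjpow, hadjvec, inner_smul_right]
    rw [hg]
    simp only [inner_smul_left, map_pow, h1]
    rw [← mul_assoc, ← mul_pow]
    have : (starRingEnd ℂ) c = l := by rw [hc, Complex.conj_conj]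
    rw [this, hlc, one_pow, one_mul]
  have hinner : ∀ n : ℕ, 1 ≤ n → ⟪A n, x⟫ = ⟪x, x⟫ := by
    intro n hn
    rw [hA]
    simp only [inner_smul_left, sum_inner, hterm, Finset.sum_const, Finset.card_range,
      nsmul_eq_mul, map_inv₀, map_natCast]
    rw [← mul_assoc, inv_mul_cancel₀ (by exact_mod_cast Nat.one_le_iff_ne_zero.mp hn), one_mul]
  have hshift : ∀ n : ℕ, c • T (A n) - A n = ((n : ℂ))⁻¹ • (g n - g 0) := by
    intro n
    have h1 : c • T (A n) = ((n : ℂ))⁻¹ • ∑ k ∈ Finset.range n, (c • T (g k)) := by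
      rw [hA]
      simp only [map_smul, map_sum, Finset.smul_sum, smul_comm c (((n : ℂ))⁻¹)]
    rw [h1, hA, ← smul_sub, ← Finset.sum_sub_distrib]
    congr 1
    rw [← Finset.sum_range_sub g]
    exact Finset.sum_congr rfl fun k _ => by rw [hsucc]
  have htend : Tendsto (fun n => c • T (A n) - A n) atTop (nhds 0) := by
    apply squeeze_zero_norm (a := fun n : ℕ => (n : ℝ)⁻¹ * (M * ‖x‖ + ‖x‖))
    · intro n
      rw [hshift, norm_smul, norm_inv, Complex.norm_natCast]
      gcongr
      calc ‖g n - g 0‖ ≤ ‖g n‖ + ‖g 0‖ := norm_sub_le _ _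
      _ ≤ M * ‖x‖ + ‖x‖ := by rw [hg0]; gcongr; exact hgnorm n
    · have := tendsto_one_div_atTop_nhds_zero_nat.mul_const (M * ‖x‖ + ‖x‖)
      simpa [one_div] using this
  -- ultrafilter limit
  set U : Ultrafilter ℕ := Ultrafilter.of atTop with hUdef
  have hU : (U : Filter ℕ) ≤ atTop := Ultrafilter.of_le _
  set F : ℕ → WeakDual ℂ H := fun n => StrongDual.toWeakDual (toDual ℂ H (A n)) with hF
  have hF_mem : ∀ n, F n ∈ WeakDual.toStrongDual ⁻¹' Metric.closedBall 0 (M * ‖x‖) := by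
    intro n
    simp only [Set.mem_preimage, Metric.mem_closedBall, dist_zero_right]
    show ‖(toDual ℂ H (A n) : StrongDual ℂ H)‖ ≤ M * ‖x‖
    rw [LinearIsometryEquiv.norm_map]
    exact hA_norm n
  obtain ⟨φ, -, hφ⟩ := (WeakDual.isCompact_closedBall (𝕜 := ℂ) (E := H) 0
      (M * ‖x‖)).ultrafilter_le_nhds (U.map F)
    (by
      simp only [Ultrafilter.coe_map, le_principal_iff, Filter.mem_map]
      exact univ_mem' hF_mem)
  have hev : ∀ z : H, Tendsto (fun n => ⟪A n, z⟫) (U : Filter ℕ) (nhds (φ z)) := by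
    intro z
    have h1 : Tendsto (fun ψ : WeakDual ℂ H => ψ z) (U.map F : Filter (WeakDual ℂ H))
        (nhds (φ z)) := ((WeakDual.eval_continuous z).tendsto φ).mono_left hφ
    have h2 : Tendsto F (U : Filter ℕ) (U.map F : Filter (WeakDual ℂ H)) := by
      rw [Ultrafilter.coe_map]; exact tendsto_map
    have := h1.comp h2
    exact this
  set w : H := (toDual ℂ H).symm (WeakDual.toStrongDual φ) with hw
  have hwinner : ∀ z : H, ⟪w, z⟫ = φ z := fun z => toDual_symm_apply
  have hφx : φ x = ⟪x, x⟫ := by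
    refine tendsto_nhds_unique (hev x) ?_
    have hcon : Tendsto (fun _ : ℕ => (⟪x, x⟫ : ℂ)) atTop (nhds ⟪x, x⟫) := tendsto_const_nhds
    have : Tendsto (fun n : ℕ => ⟪A n, x⟫) atTop (nhds ⟪x, x⟫) := by
      apply hcon.congr'
      filter_upwards [eventually_ge_atTop 1] with n hn
      exact (hinner n hn).symm
    exact this.mono_left hU
  have hwne : w ≠ 0 := by
    intro hw0
    apply hx0
    have : (⟪x, x⟫ : ℂ) = 0 := by rw [← hφx, ← hwinner, hw0, inner_zero_left]
    exact inner_self_eq_zero.mp this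
  have hkey : ∀ z : H, φ (adjoint T z) = c * φ z := by
    intro z
    have heq : ∀ n, ⟪A n, adjoint T z⟫ = c * ⟪A n, z⟫ + c * ⟪c • T (A n) - A n, z⟫ := by
      intro n
      have conj_c : (starRingEnd ℂ) c = l := by rw [hc, Complex.conj_conj]
      have e0 : ⟪c • T (A n), z⟫ = l * ⟪T (A n), z⟫ := by
        rw [inner_smul_left, conj_c]
      have e1 : ⟪A n, adjoint T z⟫ = ⟪T (A n), z⟫ := adjoint_inner_right _ _ _
      rw [e1, inner_sub_left, e0]
      have e2 : c * ⟪A n, z⟫ + c * (l * ⟪T (A n), z⟫ - ⟪A n, z⟫)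
          = (c * l) * ⟪T (A n), z⟫ := by ring
      rw [e2, hcl, one_mul]
    have hb : Tendsto (fun n => (⟪c • T (A n) - A n, z⟫ : ℂ)) (U : Filter ℕ) (nhds 0) := by
      refine Tendsto.mono_left ?_ hU
      apply squeeze_zero_norm (a := fun n => ‖c • T (A n) - A n‖ * ‖z‖)
      · intro n; exact norm_inner_le_norm _ _
      · have : Tendsto (fun n => ‖c • T (A n) - A n‖) atTop (nhds 0) := by
          simpa using htend.norm
        simpa using this.mul_const ‖z‖
    have h2 : Tendsto (fun n => ⟪A n, adjoint T z⟫) (U : Filter ℕ)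
        (nhds (c * φ z + c * 0)) := by
      have := ((hev z).const_mul c).add (hb.const_mul c)
      exact this.congr fun n => (heq n).symm
    have := tendsto_nhds_unique (hev (adjoint T z)) h2
    simpa using this
  have hfix : T w = l • w := by
    have key : ∀ z : H, ⟪T w - l • w, z⟫ = (0 : ℂ) := by
      intro z
      rw [inner_sub_left, inner_smul_left]
      have h1 : ⟪T w, z⟫ = φ (adjoint T z) := by rw [← adjoint_inner_right, hwinner]
      rw [h1, hkey, hwinner, hc]
      ring
    have := key (T w - l • w)
    rw [inner_self_eq_zero] at this
    exact sub_eq_zero.mp this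
  exact hwne (heig w hfix)

theorem stmt_16 {H : Type*} [NormedAddCommGroup H] [InnerProductSpace ℂ H]
    [CompleteSpace H] (T L : H →L[ℂ] H) (hT : ∃ M, ∀ n : ℕ, ‖T ^ n‖ ≤ M)
    (hr : spectralRadius ℂ T = 1) (hL : Function.Injective L)
    (hLT : L * T = T * L)
    (hlim : Filter.Tendsto (fun n : ℕ => ‖T ^ n * L‖) Filter.atTop (nhds 0)) :
    (spectrum ℂ T ∩ {l : ℂ | ‖l‖ = 1}).Nonempty ∧
      spectrum ℂ T ∩ {l : ℂ | ‖l‖ = 1} ⊆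
        spectrum ℂ T \
          ({l : ℂ | ∃ x : H, x ≠ 0 ∧ T x = l • x} ∪
            ({l : ℂ | ∃ x : H, x ≠ 0 ∧ adjoint T x = (starRingEnd ℂ) l • x} \
              {l : ℂ | ∃ x : H, x ≠ 0 ∧ T x = l • x})) := by
  obtain ⟨M, hM⟩ := hT
  have heig : ∀ l : ℂ, ‖l‖ = 1 → ∀ y : H, T y = l • y → y = 0 := by
    intro l hl y hy
    have hpow : ∀ n : ℕ, (T ^ n) y = l ^ n • y := by
      intro n
      induction n with
      | zero => simp
      | succ n ih =>
        rw [pow_succ', mul_apply_eq_comp, ih, map_smul, hy, smul_smul, ← pow_succ]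
    have h1 : ∀ n : ℕ, ‖L y‖ ≤ ‖T ^ n * L‖ * ‖y‖ := by
      intro n
      have hcomm : L * T ^ n = T ^ n * L := (show Commute L T from hLT).pow_right n
      have happ : (T ^ n * L) y = l ^ n • L y := by
        rw [← hcomm, mul_apply_eq_comp, hpow, map_smul]
      calc ‖L y‖ = ‖l ^ n • L y‖ := by
            rw [norm_smul, norm_pow, hl, one_pow, one_mul]
      _ = ‖(T ^ n * L) y‖ := by rw [happ]
      _ ≤ ‖T ^ n * L‖ * ‖y‖ := le_opNorm _ _
    have h2 : Filter.Tendsto (fun n : ℕ => ‖T ^ n * L‖ * ‖y‖) Filter.atTop (nhds 0) := by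
      simpa using hlim.mul_const ‖y‖
    have h3 : ‖L y‖ ≤ 0 := ge_of_tendsto' h2 h1
    have h4 : L y = 0 := norm_le_zero_iff.mp h3
    exact hL (by simpa using h4)
  constructor
  · have hnt : Nontrivial (H →L[ℂ] H) := by
      by_contra h
      rw [not_nontrivial_iff_subsingleton] at h
      have hT0 : T = 0 := Subsingleton.elim _ _
      rw [hT0, spectrum.spectralRadius_zero] at hr
      exact zero_ne_one hr
    obtain ⟨z, hz, hz1⟩ := spectrum.exists_nnnorm_eq_spectralRadius (a := T)
    refine ⟨z, hz, ?_⟩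
    rw [hr] at hz1
    have : ‖z‖₊ = 1 := by exact_mod_cast hz1
    show ‖z‖ = 1
    rw [← coe_nnnorm z, this, NNReal.coe_one]
  · rintro l ⟨hls, hl1⟩
    have hl1' : ‖l‖ = 1 := hl1
    refine ⟨hls, ?_⟩
    rintro (⟨y, hy0, hy⟩ | ⟨⟨y, hy0, hy⟩, -⟩)
    · exact hy0 (heig l hl1' y hy)
    · exact hy0 (stmt16_aux T M hM l hl1' (heig l hl1') y hy)
end
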